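/- arXiv:1501.00147 — 8 statements merged into one kernel-verified Lean document; each statement's English description precedes it below -/
import Mathlib

section
/- Suppose $z_{n+1} = A_n z_n$ has a generalized exponential dichotomy with data $(P, K, (a_j))$ and $(q_n)$ is a sequence in $\mathbb{R}^d$ such that $\sup_{n} N(n,|q|) < \infty$, where $N(n,g) = \sum_{m=-\infty}^{n-1} K \exp(-\sum_{j=m+1}^{n} a_j) g_m + \sum_{m=n}^{\infty} K \exp(-\sum_{j=n}^{m+1} a_j) g_m$. Then $\hat\phi_n = \sum_{m=-\infty}^{\infty} G(n, m+1) q_m$ is a well-defined bounded solution of $z_{n+1} = A_n z_n + q_n$, and it satisfies $|\hat\phi_n| \leq N(n,|q|)$ for all $n$. -/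
open Finset Filter ContinuousLinearMap

abbrev Euc (d : ℕ) := EuclideanSpace ℝ (Fin d)

/-- Partial sums `∑_{j=p}^{q} a_j`. -/
noncomputable def S (a : ℤ → ℝ) (p q : ℤ) : ℝ := ∑ j ∈ Finset.Icc p q, a j

/-- The general term of the dichotomy-weighted sum `N(n,g)`. -/
noncomputable def Nterm (K : ℝ) (a : ℤ → ℝ) (n : ℤ) (g : ℤ → ℝ) (m : ℤ) : ℝ :=
  if m < n then K * Real.exp (-(S a (m + 1) n)) * g m
  else K * Real.exp (-(S a n (m + 1))) * g m

/-- The map `N(n,g)` associated to a generalized exponential dichotomy. -/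
noncomputable def Nmap (K : ℝ) (a : ℤ → ℝ) (n : ℤ) (g : ℤ → ℝ) : ℝ :=
  ∑' m : ℤ, Nterm K a n g m

/-- The Green function of a generalized exponential dichotomy. -/
noncomputable def Green {d : ℕ} (W : ℤ → Euc d ≃L[ℝ] Euc d) (P : Euc d →L[ℝ] Euc d)
    (n m : ℤ) : Euc d →L[ℝ] Euc d :=
  if m ≤ n then (W n : Euc d →L[ℝ] Euc d) ∘L P ∘L ((W m).symm : Euc d →L[ℝ] Euc d)
  else -((W n : Euc d →L[ℝ] Euc d) ∘L (1 - P) ∘L ((W m).symm : Euc d →L[ℝ] Euc d))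

theorem ged_green_bounded_solution {d : ℕ}
    (A W : ℤ → Euc d ≃L[ℝ] Euc d)
    (hW : ∀ n : ℤ, W (n + 1) = (W n).trans (A n))
    (P : Euc d →L[ℝ] Euc d) (hP : P ∘L P = P)
    (K : ℝ) (hK : 1 ≤ K)
    (a : ℤ → ℝ) (ha : ∀ j : ℤ, 0 ≤ a j)
    (hdiv1 : ∀ p : ℤ, Tendsto (fun q : ℤ => ∑ j ∈ Finset.Icc p q, a j) atTop atTop)
    (hdiv2 : ∀ q : ℤ, Tendsto (fun p : ℤ => ∑ j ∈ Finset.Icc p q, a j) atBot atTop)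
    (hged1 : ∀ m n : ℤ, m ≤ n →
      ‖(W n : Euc d →L[ℝ] Euc d) ∘L P ∘L ((W m).symm : Euc d →L[ℝ] Euc d)‖
        ≤ K * Real.exp (-(S a m n)))
    (hged2 : ∀ m n : ℤ, n < m →
      ‖(W n : Euc d →L[ℝ] Euc d) ∘L (1 - P) ∘L ((W m).symm : Euc d →L[ℝ] Euc d)‖
        ≤ K * Real.exp (-(S a n m)))
    (q : ℤ → Euc d)
    (hqsum : ∀ n : ℤ, Summable (Nterm K a n (fun m => ‖q m‖)))
    (hqbdd : ∃ C : ℝ, ∀ n : ℤ, Nmap K a n (fun m => ‖q m‖) ≤ C) :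
    (∀ n : ℤ, Summable (fun m : ℤ => Green W P n (m + 1) (q m))) ∧
    (∀ n : ℤ, (∑' m : ℤ, Green W P (n + 1) (m + 1) (q m))
        = A n (∑' m : ℤ, Green W P n (m + 1) (q m)) + q n) ∧
    (∀ n : ℤ, ‖∑' m : ℤ, Green W P n (m + 1) (q m)‖ ≤ Nmap K a n (fun m => ‖q m‖)) := by

  have hbound : ∀ n m : ℤ, ‖Green W P n (m + 1) (q m)‖ ≤ Nterm K a n (fun m => ‖q m‖) m := by
    intro n m
    unfold Green Nterm
    by_cases h : m < n
    · rw [if_pos (by omega : m + 1 ≤ n), if_pos h]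
      calc ‖((W n : Euc d →L[ℝ] Euc d) ∘L P ∘L ((W (m+1)).symm : Euc d →L[ℝ] Euc d)) (q m)‖
          ≤ ‖(W n : Euc d →L[ℝ] Euc d) ∘L P ∘L ((W (m+1)).symm : Euc d →L[ℝ] Euc d)‖ * ‖q m‖ :=
            le_opNorm _ _
        _ ≤ K * Real.exp (-(S a (m+1) n)) * ‖q m‖ := by
            gcongr
            exact hged1 (m+1) n (by omega)
    · rw [if_neg (by omega : ¬ m + 1 ≤ n), if_neg h, neg_apply, norm_neg]
      calc ‖((W n : Euc d →L[ℝ] Euc d) ∘L (1 - P) ∘L ((W (m+1)).symm : Euc d →L[ℝ] Euc d)) (q m)‖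
          ≤ ‖(W n : Euc d →L[ℝ] Euc d) ∘L (1 - P) ∘L ((W (m+1)).symm : Euc d →L[ℝ] Euc d)‖ * ‖q m‖ :=
            le_opNorm _ _
        _ ≤ K * Real.exp (-(S a n (m+1))) * ‖q m‖ := by
            gcongr
            exact hged2 (m+1) n (by omega)
  have hNnonneg : ∀ n m : ℤ, 0 ≤ Nterm K a n (fun m => ‖q m‖) m := by
    intro n m
    unfold Nterm
    have hK0 : (0:ℝ) ≤ K := le_trans zero_le_one hK
    split <;> positivity
  have hsummable : ∀ n : ℤ, Summable (fun m : ℤ => Green W P n (m + 1) (q m)) := by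
    intro n
    exact Summable.of_norm_bounded (hqsum n) (hbound n)
  refine ⟨hsummable, ?_, ?_⟩
  · intro n
    have hWn : ∀ x : Euc d, W (n+1) x = A n (W n x) := by
      intro x; rw [hW n]; rfl
    have key : ∀ m : ℤ, Green W P (n+1) (m+1) (q m)
        = A n (Green W P n (m+1) (q m)) + (if m = n then q n else 0) := by
      intro m
      unfold Green
      rcases lt_trichotomy m n with h | h | h
      · rw [if_pos (by omega : m+1 ≤ n+1), if_pos (by omega : m+1 ≤ n),
          if_neg (by omega : ¬ m = n)]
        simp [ContinuousLinearMap.comp_apply, hWn]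
      · subst h
        rw [if_pos le_rfl, if_neg (by omega : ¬ m+1 ≤ m), if_pos rfl]
        simp only [ContinuousLinearMap.comp_apply, ContinuousLinearMap.neg_apply,
          ContinuousLinearEquiv.coe_coe, map_neg, hWn, ContinuousLinearMap.sub_apply,
          ContinuousLinearMap.one_apply, map_sub]
        rw [← hWn, ← hWn, (W (m+1)).apply_symm_apply]; abel
      · rw [if_neg (by omega : ¬ m+1 ≤ n+1), if_neg (by omega : ¬ m+1 ≤ n),
          if_neg (by omega : ¬ m = n)]
        simp [ContinuousLinearMap.comp_apply, hWn]
    have hs1 : Summable (fun m : ℤ => (A n : Euc d →L[ℝ] Euc d) (Green W P n (m+1) (q m))) :=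
      (hsummable n).mapL _
    have hs2 : Summable (fun m : ℤ => if m = n then q n else 0) :=
      summable_of_ne_finset_zero (s := {n}) (by intro m hm; simp at hm; simp [hm])
    calc (∑' m : ℤ, Green W P (n + 1) (m + 1) (q m))
        = ∑' m : ℤ, ((A n : Euc d →L[ℝ] Euc d) (Green W P n (m+1) (q m))
            + (if m = n then q n else 0)) := by
          refine tsum_congr fun m => ?_
          rw [key m]; rfl
      _ = (∑' m : ℤ, (A n : Euc d →L[ℝ] Euc d) (Green W P n (m+1) (q m)))
            + ∑' m : ℤ, (if m = n then q n else 0) := Summable.tsum_add hs1 hs2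
      _ = A n (∑' m : ℤ, Green W P n (m + 1) (q m)) + q n := by
          rw [tsum_ite_eq, ← ContinuousLinearMap.map_tsum _ (hsummable n)]
          rfl
  · intro n
    have hns : Summable (fun m : ℤ => ‖Green W P n (m + 1) (q m)‖) :=
      Summable.of_nonneg_of_le (fun m => norm_nonneg _) (hbound n) (hqsum n)
    calc ‖∑' m : ℤ, Green W P n (m + 1) (q m)‖
        ≤ ∑' m : ℤ, ‖Green W P n (m + 1) (q m)‖ := norm_tsum_le_tsum_norm hns
      _ ≤ ∑' m : ℤ, Nterm K a n (fun m => ‖q m‖) m := Summable.tsum_le_tsum (hbound n) hns (hqsum n)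
      _ = Nmap K a n (fun m => ‖q m‖) := rfl
end

section
/- Suppose $z_{n+1} = A_n z_n$ has a generalized exponential dichotomy and $(q_n)$ satisfies $\sup_n N(n,|q|) < \infty$. Then the inhomogeneous system $z_{n+1} = A_n z_n + q_n$ has a unique solution bounded on $\mathbb{Z}$, namely $\hat\phi_n = \sum_{m=-\infty}^{\infty} G(n,m+1) q_m$. -/
open Finset Filter ContinuousLinearMap

section Aux

variable {d : ℕ}

lemma green_apply_norm_bound (W : ℤ → Euc d ≃L[ℝ] Euc d) (P : Euc d →L[ℝ] Euc d)
    (K : ℝ) (a : ℤ → ℝ)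
    (hged1 : ∀ m n : ℤ, m ≤ n →
      ‖(W n : Euc d →L[ℝ] Euc d) ∘L P ∘L ((W m).symm : Euc d →L[ℝ] Euc d)‖
        ≤ K * Real.exp (-(S a m n)))
    (hged2 : ∀ m n : ℤ, n < m →
      ‖(W n : Euc d →L[ℝ] Euc d) ∘L (1 - P) ∘L ((W m).symm : Euc d →L[ℝ] Euc d)‖
        ≤ K * Real.exp (-(S a n m)))
    (q : ℤ → Euc d) (n m : ℤ) :
    ‖Green W P n (m + 1) (q m)‖ ≤ Nterm K a n (fun m => ‖q m‖) m := by
  unfold Green Nterm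
  by_cases h : m < n
  · rw [if_pos (Int.add_one_le_iff.mpr h), if_pos h]
    calc ‖((W n : Euc d →L[ℝ] Euc d) ∘L P ∘L ((W (m+1)).symm : Euc d →L[ℝ] Euc d)) (q m)‖
        ≤ ‖(W n : Euc d →L[ℝ] Euc d) ∘L P ∘L ((W (m+1)).symm : Euc d →L[ℝ] Euc d)‖ * ‖q m‖ :=
          le_opNorm _ _
      _ ≤ K * Real.exp (-(S a (m+1) n)) * ‖q m‖ :=
          mul_le_mul_of_nonneg_right (hged1 (m+1) n (Int.add_one_le_iff.mpr h)) (norm_nonneg _)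
  · rw [if_neg (by omega : ¬ m + 1 ≤ n), if_neg h]
    rw [ContinuousLinearMap.neg_apply, norm_neg]
    calc ‖((W n : Euc d →L[ℝ] Euc d) ∘L (1 - P) ∘L ((W (m+1)).symm : Euc d →L[ℝ] Euc d)) (q m)‖
        ≤ ‖(W n : Euc d →L[ℝ] Euc d) ∘L (1 - P) ∘L ((W (m+1)).symm : Euc d →L[ℝ] Euc d)‖ * ‖q m‖ :=
          le_opNorm _ _
      _ ≤ K * Real.exp (-(S a n (m+1))) * ‖q m‖ :=
          mul_le_mul_of_nonneg_right (hged2 (m+1) n (by omega)) (norm_nonneg _)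

lemma green_rec (A W : ℤ → Euc d ≃L[ℝ] Euc d)
    (hW : ∀ n : ℤ, W (n + 1) = (W n).trans (A n))
    (P : Euc d →L[ℝ] Euc d) (n m : ℤ) (x : Euc d) :
    Green W P (n + 1) (m + 1) x
      = A n (Green W P n (m + 1) x) + (if m = n then x else 0) := by
  unfold Green
  rcases lt_trichotomy m n with h | h | h
  · rw [if_pos (by omega : m + 1 ≤ n), if_pos (by omega : m + 1 ≤ n + 1),
      if_neg (by omega : ¬ m = n)]
    simp [hW n, ContinuousLinearMap.comp_apply, ContinuousLinearEquiv.trans_apply]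
  · subst h
    rw [if_pos (le_refl (m+1)), if_neg (by omega : ¬ m + 1 ≤ m), if_pos rfl]
    simp only [ContinuousLinearMap.comp_apply, ContinuousLinearEquiv.coe_coe,
      ContinuousLinearMap.neg_apply, map_neg, ContinuousLinearMap.sub_apply,
      ContinuousLinearMap.one_apply, map_sub, hW m, ContinuousLinearEquiv.trans_apply]
    have h2 : (((W m).trans (A m)).symm) x = (W m).symm ((A m).symm x) := rfl
    rw [h2]
    simp only [ContinuousLinearEquiv.apply_symm_apply]
    abel
  · rw [if_neg (by omega : ¬ m + 1 ≤ n), if_neg (by omega : ¬ m + 1 ≤ n + 1),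
      if_neg (by omega : ¬ m = n)]
    simp [hW n, ContinuousLinearMap.comp_apply, ContinuousLinearEquiv.trans_apply]

end Aux

theorem ged_unique_bounded_solution {d : ℕ}
    (A W : ℤ → Euc d ≃L[ℝ] Euc d)
    (hW : ∀ n : ℤ, W (n + 1) = (W n).trans (A n))
    (P : Euc d →L[ℝ] Euc d) (hP : P ∘L P = P)
    (K : ℝ) (hK : 1 ≤ K)
    (a : ℤ → ℝ) (ha : ∀ j : ℤ, 0 ≤ a j)
    (hdiv1 : ∀ p : ℤ, Tendsto (fun q : ℤ => ∑ j ∈ Finset.Icc p q, a j) atTop atTop)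
    (hdiv2 : ∀ q : ℤ, Tendsto (fun p : ℤ => ∑ j ∈ Finset.Icc p q, a j) atBot atTop)
    (hged1 : ∀ m n : ℤ, m ≤ n →
      ‖(W n : Euc d →L[ℝ] Euc d) ∘L P ∘L ((W m).symm : Euc d →L[ℝ] Euc d)‖
        ≤ K * Real.exp (-(S a m n)))
    (hged2 : ∀ m n : ℤ, n < m →
      ‖(W n : Euc d →L[ℝ] Euc d) ∘L (1 - P) ∘L ((W m).symm : Euc d →L[ℝ] Euc d)‖
        ≤ K * Real.exp (-(S a n m)))
    (q : ℤ → Euc d)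
    (hqsum : ∀ n : ℤ, Summable (Nterm K a n (fun m => ‖q m‖)))
    (hqbdd : ∃ C : ℝ, ∀ n : ℤ, Nmap K a n (fun m => ‖q m‖) ≤ C) :
    (∀ n : ℤ, Summable (fun m : ℤ => Green W P n (m + 1) (q m))) ∧
    ∀ z : ℤ → Euc d,
      ((∀ n : ℤ, z (n + 1) = A n (z n) + q n) ∧ (∃ C : ℝ, ∀ n : ℤ, ‖z n‖ ≤ C)) ↔
        z = fun n : ℤ => ∑' m : ℤ, Green W P n (m + 1) (q m) := by
  have hterm : ∀ n m : ℤ, ‖Green W P n (m + 1) (q m)‖ ≤ Nterm K a n (fun m => ‖q m‖) m :=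
    fun n m => green_apply_norm_bound W P K a hged1 hged2 q n m
  have hsum : ∀ n : ℤ, Summable (fun m : ℤ => Green W P n (m + 1) (q m)) :=
    fun n => Summable.of_norm_bounded (hqsum n) (hterm n)
  set φ : ℤ → Euc d := fun n : ℤ => ∑' m : ℤ, Green W P n (m + 1) (q m) with hφdef
  -- φ satisfies the inhomogeneous equation
  have hφeq : ∀ n : ℤ, φ (n + 1) = A n (φ n) + q n := by
    intro n
    have h1 : Summable (fun m : ℤ => A n (Green W P n (m + 1) (q m))) :=
      ((A n).summable (σ := RingHom.id ℝ)).mpr (hsum n)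
    have h2 : Summable (fun m : ℤ => if m = n then q m else 0) :=
      summable_of_ne_finset_zero (s := {n}) (by intro b hb; simp at hb; simp [hb])
    calc φ (n + 1) = ∑' m : ℤ, (A n (Green W P n (m + 1) (q m)) + if m = n then q m else 0) := by
          exact tsum_congr fun m => green_rec A W hW P n m (q m)
      _ = (∑' m : ℤ, A n (Green W P n (m + 1) (q m))) + ∑' m : ℤ, (if m = n then q m else 0) :=
          Summable.tsum_add h1 h2
      _ = A n (φ n) + q n := by
          rw [← (A n).map_tsum (σ := RingHom.id ℝ)]
          congr 1
          rw [show (fun m : ℤ => if m = n then q m else 0) = fun m : ℤ => if m = n then q n else 0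
            from funext fun m => by by_cases h : m = n <;> simp [h]]
          exact tsum_ite_eq n (fun _ => q n)
  -- φ is bounded
  obtain ⟨C, hC⟩ := hqbdd
  have hφbdd : ∀ n : ℤ, ‖φ n‖ ≤ C := by
    intro n
    have hns : Summable (fun m : ℤ => ‖Green W P n (m + 1) (q m)‖) :=
      (hqsum n).of_nonneg_of_le (fun m => norm_nonneg _) (hterm n)
    calc ‖φ n‖ ≤ ∑' m : ℤ, ‖Green W P n (m + 1) (q m)‖ := norm_tsum_le_tsum_norm hns
      _ ≤ ∑' m : ℤ, Nterm K a n (fun m => ‖q m‖) m := Summable.tsum_le_tsum (hterm n) hns (hqsum n)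
      _ ≤ C := hC n
  refine ⟨hsum, fun z => ⟨?_, ?_⟩⟩
  · rintro ⟨hz1, Cz, hz2⟩
    -- uniqueness: u = z - φ is a bounded homogeneous solution, hence zero
    set u : ℤ → Euc d := fun n => z n - φ n with hudef
    have hurec : ∀ n : ℤ, u (n + 1) = A n (u n) := by
      intro n
      simp only [hudef, hz1 n, hφeq n, map_sub]
      abel
    have hubdd : ∀ n : ℤ, ‖u n‖ ≤ Cz + C := fun n =>
      le_trans (norm_sub_le _ _) (add_le_add (hz2 n) (hφbdd n))
    set c : Euc d := (W 0).symm (u 0) with hcdef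
    have hu : ∀ n : ℤ, u n = W n c := by
      intro n
      induction n using Int.induction_on with
      | zero => simp [hcdef]
      | succ i ih => rw [hurec i, ih, hW i]; simp [ContinuousLinearEquiv.trans_apply]
      | pred i ih =>
          have h1 : u (-(i:ℤ) - 1 + 1) = A (-(i:ℤ) - 1) (u (-(i:ℤ) - 1)) := hurec _
          have h2 : (-(i:ℤ) - 1 + 1) = -(i:ℤ) := by ring
          rw [h2] at h1
          have h3 : W (-(i:ℤ)) c = A (-(i:ℤ) - 1) (W (-(i:ℤ) - 1) c) := by
            have := hW (-(i:ℤ) - 1)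
            rw [show (-(i:ℤ) - 1 + 1) = -(i:ℤ) by ring] at this
            rw [this]; simp [ContinuousLinearEquiv.trans_apply]
          exact (A (-(i:ℤ) - 1)).injective (by rw [← h1, ← h3, ← ih])
    have hCu : (0:ℝ) ≤ Cz + C := le_trans (norm_nonneg _) (hubdd 0)
    have hKnn : (0:ℝ) ≤ K := le_trans zero_le_one hK
    -- P c = 0
    have hPc : P c = 0 := by
      have key : ∀ m : ℤ, m ≤ 0 → ‖W 0 (P c)‖ ≤ K * (Cz + C) * Real.exp (-(S a m 0)) := by
        intro m hm
        have heq : W 0 (P c) = ((W 0 : Euc d →L[ℝ] Euc d) ∘L P ∘L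
            ((W m).symm : Euc d →L[ℝ] Euc d)) (u m) := by
          rw [hu m]
          simp [ContinuousLinearMap.comp_apply]
        rw [heq]
        calc ‖((W 0 : Euc d →L[ℝ] Euc d) ∘L P ∘L ((W m).symm : Euc d →L[ℝ] Euc d)) (u m)‖
            ≤ ‖(W 0 : Euc d →L[ℝ] Euc d) ∘L P ∘L ((W m).symm : Euc d →L[ℝ] Euc d)‖ * ‖u m‖ :=
              le_opNorm _ _
          _ ≤ K * Real.exp (-(S a m 0)) * (Cz + C) :=
              mul_le_mul (hged1 m 0 hm) (hubdd m) (norm_nonneg _) (by positivity)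
          _ = K * (Cz + C) * Real.exp (-(S a m 0)) := by ring
      have hlim : Tendsto (fun m : ℤ => K * (Cz + C) * Real.exp (-(S a m 0))) atBot (nhds 0) := by
        have h0 : Tendsto (fun m : ℤ => Real.exp (-(S a m 0))) atBot (nhds 0) :=
          Real.tendsto_exp_atBot.comp (tendsto_neg_atTop_atBot.comp (hdiv2 0))
        simpa using h0.const_mul (K * (Cz + C))
      have hle : ‖W 0 (P c)‖ ≤ 0 :=
        ge_of_tendsto hlim (eventually_atBot.mpr ⟨0, key⟩)
      have : W 0 (P c) = 0 := norm_le_zero_iff.mp hle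
      exact (W 0).injective (by rw [this]; simp)
    -- (1 - P) c = 0
    have hQc : ((1 : Euc d →L[ℝ] Euc d) - P) c = 0 := by
      have key : ∀ m : ℤ, 0 < m →
          ‖W 0 (((1 : Euc d →L[ℝ] Euc d) - P) c)‖ ≤ K * (Cz + C) * Real.exp (-(S a 0 m)) := by
        intro m hm
        have heq : W 0 (((1 : Euc d →L[ℝ] Euc d) - P) c)
            = ((W 0 : Euc d →L[ℝ] Euc d) ∘L (1 - P) ∘L
            ((W m).symm : Euc d →L[ℝ] Euc d)) (u m) := by
          rw [hu m]
          simp [ContinuousLinearMap.comp_apply]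
        rw [heq]
        calc ‖((W 0 : Euc d →L[ℝ] Euc d) ∘L (1 - P) ∘L ((W m).symm : Euc d →L[ℝ] Euc d)) (u m)‖
            ≤ ‖(W 0 : Euc d →L[ℝ] Euc d) ∘L (1 - P) ∘L ((W m).symm : Euc d →L[ℝ] Euc d)‖ * ‖u m‖ :=
              le_opNorm _ _
          _ ≤ K * Real.exp (-(S a 0 m)) * (Cz + C) :=
              mul_le_mul (hged2 m 0 hm) (hubdd m) (norm_nonneg _) (by positivity)
          _ = K * (Cz + C) * Real.exp (-(S a 0 m)) := by ring
      have hlim : Tendsto (fun m : ℤ => K * (Cz + C) * Real.exp (-(S a 0 m))) atTop (nhds 0) := by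
        have h0 : Tendsto (fun m : ℤ => Real.exp (-(S a 0 m))) atTop (nhds 0) :=
          Real.tendsto_exp_atBot.comp (tendsto_neg_atTop_atBot.comp (hdiv1 0))
        simpa using h0.const_mul (K * (Cz + C))
      have hle : ‖W 0 (((1 : Euc d →L[ℝ] Euc d) - P) c)‖ ≤ 0 :=
        ge_of_tendsto hlim (eventually_atTop.mpr ⟨1, fun m hm => key m (by omega)⟩)
      have : W 0 (((1 : Euc d →L[ℝ] Euc d) - P) c) = 0 := norm_le_zero_iff.mp hle
      exact (W 0).injective (by rw [this]; simp)
    have hc : c = 0 := by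
      have h := hQc
      rw [ContinuousLinearMap.sub_apply, ContinuousLinearMap.one_apply, hPc, sub_zero] at h
      exact h
    funext n
    have := hu n
    rw [hc] at this
    simp only [map_zero] at this
    have : z n = φ n := by
      have h := this
      rw [hudef] at h
      simpa [sub_eq_zero] using h
    exact this
  · rintro rfl
    exact ⟨hφeq, ⟨C, hφbdd⟩⟩
end

section
/- Suppose $z_{n+1} = A_n z_n$ has a generalized exponential dichotomy, and $q : \mathbb{Z} \times \mathbb{R}^d \to \mathbb{R}^d$ satisfies $|q(n,z)| \leq Q_n$ and $|q(n,z) - q(n,\tilde z)| \leq r_n |z - \tilde z|$ for all $n, z, \tilde z$, where $N(n,Q) \leq \tilde B$ and $N(n,r) \leq \theta < 1$ for all $n$. Then the nonlinear system $z_{n+1} = A_n z_n + q(n, z_n)$ has a unique solution bounded on $\mathbb{Z}$, which satisfies the fixed-point equation $\varphi^*_n = \sum_{k=-\infty}^{\infty} G(n, k+1) q(k, \varphi^*_k)$ and $|\varphi^*_n| \leq \tilde B$ for all $n$. -/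
open Finset Filter ContinuousLinearMap
open Topology

/-- Coefficient of the weighted sum `N`. -/
noncomputable def cG (K : ℝ) (a : ℤ → ℝ) (n k : ℤ) : ℝ :=
  if k < n then K * Real.exp (-(S a (k + 1) n)) else K * Real.exp (-(S a n (k + 1)))

lemma Nterm_eq_cG (K : ℝ) (a : ℤ → ℝ) (n : ℤ) (g : ℤ → ℝ) (k : ℤ) :
    Nterm K a n g k = cG K a n k * g k := by
  unfold Nterm cG; split <;> rfl

lemma cG_nonneg {K : ℝ} (hK : 0 ≤ K) (a : ℤ → ℝ) (n k : ℤ) : 0 ≤ cG K a n k := by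
  unfold cG; split <;> positivity

section main

variable {d : ℕ}

lemma green_norm_le (A W : ℤ → Euc d ≃L[ℝ] Euc d) (P : Euc d →L[ℝ] Euc d)
    (K : ℝ) (a : ℤ → ℝ)
    (hged1 : ∀ m n : ℤ, m ≤ n →
      ‖(W n : Euc d →L[ℝ] Euc d) ∘L P ∘L ((W m).symm : Euc d →L[ℝ] Euc d)‖
        ≤ K * Real.exp (-(S a m n)))
    (hged2 : ∀ m n : ℤ, n < m →
      ‖(W n : Euc d →L[ℝ] Euc d) ∘L (1 - P) ∘L ((W m).symm : Euc d →L[ℝ] Euc d)‖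
        ≤ K * Real.exp (-(S a n m)))
    (n k : ℤ) : ‖Green W P n (k + 1)‖ ≤ cG K a n k := by
  unfold Green cG
  by_cases h : k < n
  · rw [if_pos (by omega : k + 1 ≤ n), if_pos h]
    exact hged1 (k + 1) n (by omega)
  · rw [if_neg (by omega : ¬ k + 1 ≤ n), if_neg h, norm_neg]
    exact hged2 (k + 1) n (by omega)

lemma green_shift (A W : ℤ → Euc d ≃L[ℝ] Euc d)
    (hW : ∀ n : ℤ, W (n + 1) = (W n).trans (A n)) (P : Euc d →L[ℝ] Euc d)
    (g : ℤ → Euc d) (n : ℤ)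
    (hs : Summable fun k : ℤ => Green W P n (k + 1) (g k)) :
    ∑' k : ℤ, Green W P (n + 1) (k + 1) (g k)
      = A n (∑' k : ℤ, Green W P n (k + 1) (g k)) + g n := by
  have h2 : ∀ z : Euc d, A n ((W n) z) = (W (n + 1)) z := by
    intro z; rw [hW n]; rfl
  have hpt : ∀ (m : ℤ) (x : Euc d),
      Green W P (n + 1) m x = A n (Green W P n m x) + (if m = n + 1 then x else 0) := by
    intro m x
    rcases lt_trichotomy m (n + 1) with h | h | h
    · rw [if_neg (by omega)]
      simp only [Green, if_pos (by omega : m ≤ n), if_pos (by omega : m ≤ n + 1)]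
      simp only [comp_apply, ContinuousLinearEquiv.coe_coe, h2, add_zero]
    · subst h
      rw [if_pos rfl]
      simp only [Green, if_pos (le_refl (n + 1)), if_neg (by omega : ¬ (n + 1 : ℤ) ≤ n)]
      have hx : (W (n + 1)) ((W (n + 1)).symm x) = x := (W (n + 1)).apply_symm_apply x
      simp only [comp_apply, ContinuousLinearEquiv.coe_coe, ContinuousLinearMap.neg_apply,
        map_neg, sub_apply, one_apply, map_sub, h2, hx]
      simp only [ContinuousLinearMap.one_apply, hx]
      abel
    · rw [if_neg (by omega)]
      simp only [Green, if_neg (by omega : ¬ m ≤ n), if_neg (by omega : ¬ m ≤ n + 1)]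
      simp only [comp_apply, ContinuousLinearEquiv.coe_coe, ContinuousLinearMap.neg_apply,
        map_neg, h2, add_zero]
  have hsum2 : Summable fun k : ℤ => (if k = n then g n else 0 : Euc d) :=
    summable_of_ne_finset_zero (s := {n}) (fun k hk => if_neg (by simpa using hk))
  have hsum1 : Summable fun k : ℤ => A n (Green W P n (k + 1) (g k)) := by
    simpa using ((A n : Euc d →L[ℝ] Euc d)).summable hs
  calc ∑' k : ℤ, Green W P (n + 1) (k + 1) (g k)
      = ∑' k : ℤ, (A n (Green W P n (k + 1) (g k)) + if k = n then g n else 0) := by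
        refine tsum_congr fun k => ?_
        rw [hpt (k + 1) (g k)]
        congr 1
        by_cases hk : k = n
        · subst hk; simp
        · rw [if_neg (by omega), if_neg hk]
    _ = (∑' k : ℤ, A n (Green W P n (k + 1) (g k))) + ∑' k : ℤ, (if k = n then g n else 0 : Euc d) :=
        Summable.tsum_add hsum1 hsum2
    _ = A n (∑' k : ℤ, Green W P n (k + 1) (g k)) + g n := by
        rw [show (∑' k : ℤ, (if k = n then g n else 0 : Euc d)) = g n from tsum_ite_eq n (fun _ => g n)]
        congr 1
        have := ((A n : Euc d →L[ℝ] Euc d)).map_tsum hs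
        simpa using this.symm

lemma homog_zero (A W : ℤ → Euc d ≃L[ℝ] Euc d)
    (hW : ∀ n : ℤ, W (n + 1) = (W n).trans (A n)) (P : Euc d →L[ℝ] Euc d)
    (K : ℝ) (hK : 1 ≤ K) (a : ℤ → ℝ)
    (hdiv1 : ∀ p : ℤ, Tendsto (fun q : ℤ => ∑ j ∈ Finset.Icc p q, a j) atTop atTop)
    (hdiv2 : ∀ q : ℤ, Tendsto (fun p : ℤ => ∑ j ∈ Finset.Icc p q, a j) atBot atTop)
    (hged1 : ∀ m n : ℤ, m ≤ n →
      ‖(W n : Euc d →L[ℝ] Euc d) ∘L P ∘L ((W m).symm : Euc d →L[ℝ] Euc d)‖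
        ≤ K * Real.exp (-(S a m n)))
    (hged2 : ∀ m n : ℤ, n < m →
      ‖(W n : Euc d →L[ℝ] Euc d) ∘L (1 - P) ∘L ((W m).symm : Euc d →L[ℝ] Euc d)‖
        ≤ K * Real.exp (-(S a n m)))
    (w : ℤ → Euc d) (hrec : ∀ n : ℤ, w (n + 1) = A n (w n))
    (M : ℝ) (hb : ∀ n : ℤ, ‖w n‖ ≤ M) : ∀ n : ℤ, w n = 0 := by
  have hK0 : (0 : ℝ) ≤ K := le_trans zero_le_one hK
  set M' := max M 0 with hM'
  have hb' : ∀ n : ℤ, ‖w n‖ ≤ M' := fun n => le_trans (hb n) (le_max_left _ _)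
  have hM'0 : 0 ≤ M' := le_max_right _ _
  have step : ∀ n : ℤ, (W (n + 1)).symm (w (n + 1)) = (W n).symm (w n) := by
    intro n
    rw [hrec n, hW n, ContinuousLinearEquiv.symm_trans_apply]
    simp
  set v := (W (0 : ℤ)).symm (w 0) with hv
  have key : ∀ n : ℤ, (W n).symm (w n) = v := by
    intro n
    induction n using Int.induction_on with
    | zero => rfl
    | succ i ih => rw [step i, ih]
    | pred i ih =>
        have h := step (-(i : ℤ) - 1)
        rw [show (-(i : ℤ) - 1 + 1) = -(i : ℤ) by ring] at h
        rw [← h, ih]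
  -- P v = 0
  have hPv : P v = 0 := by
    have hle : ∀ m : ℤ, m ≤ 0 → ‖(W (0 : ℤ)) (P v)‖ ≤ K * Real.exp (-(S a m 0)) * M' := by
      intro m hm
      have he : (W (0 : ℤ)) (P v) =
          ((W (0 : ℤ) : Euc d →L[ℝ] Euc d) ∘L P ∘L ((W m).symm : Euc d →L[ℝ] Euc d)) (w m) := by
        simp [key m]
      rw [he]
      calc ‖((W (0 : ℤ) : Euc d →L[ℝ] Euc d) ∘L P ∘L ((W m).symm : Euc d →L[ℝ] Euc d)) (w m)‖
          ≤ ‖(W (0 : ℤ) : Euc d →L[ℝ] Euc d) ∘L P ∘L ((W m).symm : Euc d →L[ℝ] Euc d)‖ * ‖w m‖ :=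
            le_opNorm _ _
        _ ≤ (K * Real.exp (-(S a m 0))) * M' :=
            mul_le_mul (hged1 m 0 hm) (hb' m) (norm_nonneg _) (by positivity)
    have ht : Tendsto (fun m : ℤ => K * Real.exp (-(S a m 0)) * M') atBot (𝓝 0) := by
      have h1 : Tendsto (fun m : ℤ => Real.exp (-(S a m 0))) atBot (𝓝 0) := by
        have := Real.tendsto_exp_neg_atTop_nhds_zero.comp (hdiv2 0)
        exact this
      have := (h1.const_mul K).mul_const M'
      simpa using this
    have h0 : ‖(W (0 : ℤ)) (P v)‖ ≤ 0 :=
      ge_of_tendsto ht (eventually_atBot.2 ⟨0, fun m hm => hle m hm⟩)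
    have h0' : (W (0 : ℤ)) (P v) = 0 := by
      rwa [← norm_le_zero_iff]
    have := congrArg (W (0 : ℤ)).symm h0'
    simpa using this
  -- (1 - P) v = 0
  have hQv : v - P v = 0 := by
    have hle : ∀ m : ℤ, 0 < m → ‖(W (0 : ℤ)) (v - P v)‖ ≤ K * Real.exp (-(S a 0 m)) * M' := by
      intro m hm
      have he : (W (0 : ℤ)) (v - P v) =
          ((W (0 : ℤ) : Euc d →L[ℝ] Euc d) ∘L (1 - P) ∘L ((W m).symm : Euc d →L[ℝ] Euc d)) (w m) := by
        simp [key m, sub_apply]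
      rw [he]
      calc ‖((W (0 : ℤ) : Euc d →L[ℝ] Euc d) ∘L (1 - P) ∘L ((W m).symm : Euc d →L[ℝ] Euc d)) (w m)‖
          ≤ ‖(W (0 : ℤ) : Euc d →L[ℝ] Euc d) ∘L (1 - P) ∘L ((W m).symm : Euc d →L[ℝ] Euc d)‖ * ‖w m‖ :=
            le_opNorm _ _
        _ ≤ (K * Real.exp (-(S a 0 m))) * M' :=
            mul_le_mul (hged2 m 0 hm) (hb' m) (norm_nonneg _) (by positivity)
    have ht : Tendsto (fun m : ℤ => K * Real.exp (-(S a 0 m)) * M') atTop (𝓝 0) := by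
      have h1 : Tendsto (fun m : ℤ => Real.exp (-(S a 0 m))) atTop (𝓝 0) := by
        have := Real.tendsto_exp_neg_atTop_nhds_zero.comp (hdiv1 0)
        exact this
      have := (h1.const_mul K).mul_const M'
      simpa using this
    have h0 : ‖(W (0 : ℤ)) (v - P v)‖ ≤ 0 :=
      ge_of_tendsto ht (eventually_atTop.2 ⟨1, fun m hm => hle m (by omega)⟩)
    have h0' : (W (0 : ℤ)) (v - P v) = 0 := by
      rwa [← norm_le_zero_iff]
    have := congrArg (W (0 : ℤ)).symm h0'
    simpa using this
  have hv0 : v = 0 := by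
    rw [hPv, sub_zero] at hQv
    exact hQv
  intro n
  have := congrArg (W n) (key n)
  rw [hv0] at this
  simpa using this

end main

theorem ged_nonlinear_unique_bounded_solution {d : ℕ}
    (A W : ℤ → Euc d ≃L[ℝ] Euc d)
    (hW : ∀ n : ℤ, W (n + 1) = (W n).trans (A n))
    (P : Euc d →L[ℝ] Euc d) (hP : P ∘L P = P)
    (K : ℝ) (hK : 1 ≤ K)
    (a : ℤ → ℝ) (ha : ∀ j : ℤ, 0 ≤ a j)
    (hdiv1 : ∀ p : ℤ, Tendsto (fun q : ℤ => ∑ j ∈ Finset.Icc p q, a j) atTop atTop)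
    (hdiv2 : ∀ q : ℤ, Tendsto (fun p : ℤ => ∑ j ∈ Finset.Icc p q, a j) atBot atTop)
    (hged1 : ∀ m n : ℤ, m ≤ n →
      ‖(W n : Euc d →L[ℝ] Euc d) ∘L P ∘L ((W m).symm : Euc d →L[ℝ] Euc d)‖
        ≤ K * Real.exp (-(S a m n)))
    (hged2 : ∀ m n : ℤ, n < m →
      ‖(W n : Euc d →L[ℝ] Euc d) ∘L (1 - P) ∘L ((W m).symm : Euc d →L[ℝ] Euc d)‖
        ≤ K * Real.exp (-(S a n m)))
    (q : ℤ → Euc d → Euc d) (Q r : ℤ → ℝ)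
    (hQ : ∀ (n : ℤ) (z : Euc d), ‖q n z‖ ≤ Q n)
    (hr : ∀ (n : ℤ) (z z' : Euc d), ‖q n z - q n z'‖ ≤ r n * ‖z - z'‖)
    (B' θ : ℝ)
    (hQsum : ∀ n : ℤ, Summable (Nterm K a n Q))
    (hrsum : ∀ n : ℤ, Summable (Nterm K a n r))
    (hNQ : ∀ n : ℤ, Nmap K a n Q ≤ B')
    (hNr : ∀ n : ℤ, Nmap K a n r ≤ θ) (hθ : θ < 1) :
    ∃ φ : ℤ → Euc d,
      (∀ n : ℤ, φ (n + 1) = A n (φ n) + q n (φ n)) ∧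
      (∃ C : ℝ, ∀ n : ℤ, ‖φ n‖ ≤ C) ∧
      (∀ z : ℤ → Euc d,
        (∀ n : ℤ, z (n + 1) = A n (z n) + q n (z n)) → (∃ C : ℝ, ∀ n : ℤ, ‖z n‖ ≤ C) →
          z = φ) ∧
      (∀ n : ℤ, φ n = ∑' k : ℤ, Green W P n (k + 1) (q k (φ k))) ∧
      (∀ n : ℤ, ‖φ n‖ ≤ B') := by
  have hK0 : (0 : ℝ) ≤ K := le_trans zero_le_one hK
  have hQ0 : ∀ m : ℤ, 0 ≤ Q m := fun m => le_trans (norm_nonneg _) (hQ m 0)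
  have hB'0 : 0 ≤ B' := by
    refine le_trans ?_ (hNQ 0)
    exact tsum_nonneg fun m => by
      rw [Nterm_eq_cG]; exact mul_nonneg (cG_nonneg hK0 a 0 m) (hQ0 m)
  rcases subsingleton_or_nontrivial (Euc d) with hsub | hnt
  · refine ⟨fun _ => 0, fun n => Subsingleton.elim _ _, ⟨0, fun n => by simp⟩,
      fun z _ _ => funext fun n => Subsingleton.elim _ _,
      fun n => Subsingleton.elim _ _, fun n => by simpa using hB'0⟩
  -- nontrivial case
  have hr0 : ∀ m : ℤ, 0 ≤ r m := by
    intro m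
    obtain ⟨z, z', hzz⟩ := exists_pair_ne (Euc d)
    have h1 : (0 : ℝ) ≤ r m * ‖z - z'‖ := le_trans (norm_nonneg _) (hr m z z')
    have h2 : 0 < ‖z - z'‖ := by
      rw [norm_pos_iff]; exact sub_ne_zero.2 hzz
    rw [mul_comm] at h1
    exact nonneg_of_mul_nonneg_right h1 h2
  have hθ0 : 0 ≤ θ := by
    refine le_trans ?_ (hNr 0)
    exact tsum_nonneg fun m => by
      rw [Nterm_eq_cG]; exact mul_nonneg (cG_nonneg hK0 a 0 m) (hr0 m)
  have hGnorm := green_norm_le A W P K a hged1 hged2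
  -- pointwise bound and summability
  have hbound : ∀ (z : ℤ → Euc d) (n k : ℤ),
      ‖Green W P n (k + 1) (q k (z k))‖ ≤ Nterm K a n Q k := by
    intro z n k
    rw [Nterm_eq_cG]
    calc ‖Green W P n (k + 1) (q k (z k))‖
        ≤ ‖Green W P n (k + 1)‖ * ‖q k (z k)‖ := le_opNorm _ _
      _ ≤ cG K a n k * Q k :=
          mul_le_mul (hGnorm n k) (hQ k (z k)) (norm_nonneg _) (cG_nonneg hK0 a n k)
  have hsumz : ∀ (z : ℤ → Euc d) (n : ℤ),
      Summable fun k : ℤ => Green W P n (k + 1) (q k (z k)) := by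
    intro z n
    exact Summable.of_norm_bounded (hQsum n) (hbound z n)
  have hnormB : ∀ (z : ℤ → Euc d) (n : ℤ),
      ‖∑' k : ℤ, Green W P n (k + 1) (q k (z k))‖ ≤ B' := by
    intro z n
    calc ‖∑' k : ℤ, Green W P n (k + 1) (q k (z k))‖
        ≤ ∑' k : ℤ, ‖Green W P n (k + 1) (q k (z k))‖ :=
          norm_tsum_le_tsum_norm
            (Summable.of_nonneg_of_le (fun k => norm_nonneg _) (hbound z n) (hQsum n))
      _ ≤ ∑' k : ℤ, Nterm K a n Q k :=
          Summable.tsum_le_tsum (hbound z n)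
            (Summable.of_nonneg_of_le (fun k => norm_nonneg _) (hbound z n) (hQsum n))
            (hQsum n)
      _ ≤ B' := hNQ n
  -- the contraction on bounded functions
  set X := BoundedContinuousFunction ℤ (Euc d)
  let T : X → X := fun φ =>
    BoundedContinuousFunction.ofNormedAddCommGroup
      (fun n => ∑' k : ℤ, Green W P n (k + 1) (q k (φ k)))
      continuous_of_discreteTopology B' (hnormB φ)
  have hTapp : ∀ (φ : X) (n : ℤ), T φ n = ∑' k : ℤ, Green W P n (k + 1) (q k (φ k)) :=
    fun φ n => rfl
  have hlip : ∀ φ ψ : X, dist (T φ) (T ψ) ≤ θ * dist φ ψ := by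
    intro φ ψ
    rw [BoundedContinuousFunction.dist_le (by positivity)]
    intro n
    rw [dist_eq_norm, hTapp, hTapp, ← Summable.tsum_sub (hsumz φ n) (hsumz ψ n)]
    have hterm : ∀ k : ℤ,
        ‖Green W P n (k + 1) (q k (φ k)) - Green W P n (k + 1) (q k (ψ k))‖
          ≤ Nterm K a n r k * dist φ ψ := by
      intro k
      rw [← map_sub, Nterm_eq_cG]
      calc ‖Green W P n (k + 1) (q k (φ k) - q k (ψ k))‖
          ≤ ‖Green W P n (k + 1)‖ * ‖q k (φ k) - q k (ψ k)‖ := le_opNorm _ _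
        _ ≤ cG K a n k * (r k * ‖φ k - ψ k‖) :=
            mul_le_mul (hGnorm n k) (hr k (φ k) (ψ k)) (norm_nonneg _) (cG_nonneg hK0 a n k)
        _ ≤ cG K a n k * (r k * dist φ ψ) := by
            refine mul_le_mul_of_nonneg_left ?_ (cG_nonneg hK0 a n k)
            refine mul_le_mul_of_nonneg_left ?_ (hr0 k)
            rw [← dist_eq_norm]
            exact BoundedContinuousFunction.dist_coe_le_dist k
        _ = cG K a n k * r k * dist φ ψ := by ring
    have hsum' : Summable fun k : ℤ => Nterm K a n r k * dist φ ψ :=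
      (hrsum n).mul_right _
    calc ‖∑' k : ℤ, (Green W P n (k + 1) (q k (φ k)) - Green W P n (k + 1) (q k (ψ k)))‖
        ≤ ∑' k : ℤ, ‖Green W P n (k + 1) (q k (φ k)) - Green W P n (k + 1) (q k (ψ k))‖ :=
          norm_tsum_le_tsum_norm
            (Summable.of_nonneg_of_le (fun k => norm_nonneg _) hterm hsum')
      _ ≤ ∑' k : ℤ, Nterm K a n r k * dist φ ψ :=
          Summable.tsum_le_tsum hterm
            (Summable.of_nonneg_of_le (fun k => norm_nonneg _) hterm hsum') hsum'
      _ = (∑' k : ℤ, Nterm K a n r k) * dist φ ψ := tsum_mul_right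
      _ ≤ θ * dist φ ψ := mul_le_mul_of_nonneg_right (hNr n) dist_nonneg
  have hcontr : ContractingWith ⟨θ, hθ0⟩ T := by
    constructor
    · exact_mod_cast hθ
    · exact LipschitzWith.of_dist_le_mul fun φ ψ => hlip φ ψ
  set φhat := hcontr.fixedPoint T with hφhat
  have hfix : T φhat = φhat := hcontr.fixedPoint_isFixedPt
  set φ : ℤ → Euc d := fun n => φhat n with hφdef
  have hfixeq : ∀ n : ℤ, φ n = ∑' k : ℤ, Green W P n (k + 1) (q k (φ k)) := by
    intro n
    conv_lhs => rw [hφdef, ← hfix]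
    rfl
  have hsolve : ∀ (z : ℤ → Euc d),
      (∀ n : ℤ, z n = ∑' k : ℤ, Green W P n (k + 1) (q k (z k))) →
      ∀ n : ℤ, z (n + 1) = A n (z n) + q n (z n) := by
    intro z hz n
    rw [hz (n + 1), green_shift A W hW P (fun k => q k (z k)) n (hsumz z n), ← hz n]
  refine ⟨φ, hsolve φ hfixeq, ⟨‖φhat‖, fun n => φhat.norm_coe_le_norm n⟩, ?_, hfixeq,
    fun n => by rw [hfixeq n]; exact hnormB φ n⟩
  -- uniqueness
  intro z hzrec ⟨C, hC⟩
  have hC0 : ∀ n : ℤ, ‖z n‖ ≤ max C 0 := fun n => le_trans (hC n) (le_max_left _ _)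
  set zhat : X := BoundedContinuousFunction.ofNormedAddCommGroup z
    continuous_of_discreteTopology (max C 0) hC0 with hzhat
  have hzcoe : ∀ n : ℤ, zhat n = z n := fun n => rfl
  -- w := z - T zhat satisfies the homogeneous equation and is bounded
  set w : ℤ → Euc d := fun n => z n - T zhat n with hwdef
  have hwrec : ∀ n : ℤ, w (n + 1) = A n (w n) := by
    intro n
    have h1 : T zhat (n + 1) = A n (T zhat n) + q n (z n) := by
      rw [hTapp, hTapp]
      have := green_shift A W hW P (fun k => q k (zhat k)) n (hsumz zhat n)
      simpa [hzcoe] using this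
    rw [hwdef]
    simp only [hzrec n, h1]
    rw [map_sub]
    abel
  have hwbdd : ∀ n : ℤ, ‖w n‖ ≤ max C 0 + B' := by
    intro n
    calc ‖w n‖ ≤ ‖z n‖ + ‖T zhat n‖ := norm_sub_le _ _
      _ ≤ max C 0 + B' := add_le_add (hC0 n) (by rw [hTapp]; exact hnormB zhat n)
  have hw0 : ∀ n : ℤ, w n = 0 :=
    homog_zero A W hW P K hK a hdiv1 hdiv2 hged1 hged2 w hwrec (max C 0 + B') hwbdd
  have hzfix : T zhat = zhat := by
    ext n
    have := hw0 n
    rw [hwdef] at this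
    have := sub_eq_zero.mp this
    rw [hzcoe, ← this]
  have : zhat = φhat := hcontr.fixedPoint_unique hzfix
  funext n
  have := congrArg (fun f : X => f n) this
  simpa [hzcoe] using this
end

section
/- Suppose $z_{n+1}=A_nz_n$ has a generalized exponential dichotomy and $f, g$ satisfy: $|f(n,x)| \leq F_n$, $|g(n,x)| \leq G_n$ with $N(n, G+F) \leq B$, and both are $r_n$-Lipschitz in $x$ with $N(n,r) \leq \theta < 1$. Then for every $(m,\xi)$, the system $w_{n+1} = A_n w_n - f(n, x(n,m,\xi)) + g(n, w_n + x(n,m,\xi))$ has a unique bounded solution $\chi(\cdot;(m,\xi))$, and it satisfies $|\chi(n;(m,\xi))| \leq B$ for all $n$. -/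
open Finset Filter ContinuousLinearMap

theorem auxiliary_system_unique_bounded_solution {d : ℕ}
    (A W : ℤ → Euc d ≃L[ℝ] Euc d)
    (hW : ∀ n : ℤ, W (n + 1) = (W n).trans (A n))
    (P : Euc d →L[ℝ] Euc d) (hP : P ∘L P = P)
    (K : ℝ) (hK : 1 ≤ K)
    (a : ℤ → ℝ) (ha : ∀ j : ℤ, 0 ≤ a j)
    (hdiv1 : ∀ p : ℤ, Tendsto (fun q : ℤ => ∑ j ∈ Finset.Icc p q, a j) atTop atTop)
    (hdiv2 : ∀ q : ℤ, Tendsto (fun p : ℤ => ∑ j ∈ Finset.Icc p q, a j) atBot atTop)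
    (hged1 : ∀ m n : ℤ, m ≤ n →
      ‖(W n : Euc d →L[ℝ] Euc d) ∘L P ∘L ((W m).symm : Euc d →L[ℝ] Euc d)‖
        ≤ K * Real.exp (-(S a m n)))
    (hged2 : ∀ m n : ℤ, n < m →
      ‖(W n : Euc d →L[ℝ] Euc d) ∘L (1 - P) ∘L ((W m).symm : Euc d →L[ℝ] Euc d)‖
        ≤ K * Real.exp (-(S a n m)))
    (f g : ℤ → Euc d → Euc d) (F G r : ℤ → ℝ) (B θ : ℝ)
    (hF : ∀ (n : ℤ) (x : Euc d), ‖f n x‖ ≤ F n)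
    (hG : ∀ (n : ℤ) (x : Euc d), ‖g n x‖ ≤ G n)
    (hFGsum : ∀ n : ℤ, Summable (Nterm K a n (fun m => G m + F m)))
    (hH2 : ∀ n : ℤ, Nmap K a n (fun m => G m + F m) ≤ B)
    (hrpos : ∀ n : ℤ, 0 ≤ r n)
    (hflip : ∀ (n : ℤ) (x₁ x₂ : Euc d), ‖f n x₁ - f n x₂‖ ≤ r n * ‖x₁ - x₂‖)
    (hglip : ∀ (n : ℤ) (x₁ x₂ : Euc d), ‖g n x₁ - g n x₂‖ ≤ r n * ‖x₁ - x₂‖)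
    (hrsum : ∀ n : ℤ, Summable (Nterm K a n r))
    (hH3 : ∀ n : ℤ, Nmap K a n r ≤ θ) (hθ : θ < 1)
    (x : ℤ → Euc d) (hx : ∀ n : ℤ, x (n + 1) = A n (x n) + f n (x n)) :
    ∃ χ : ℤ → Euc d,
      (∀ n : ℤ, χ (n + 1) = A n (χ n) - f n (x n) + g n (χ n + x n)) ∧
      (∃ C : ℝ, ∀ n : ℤ, ‖χ n‖ ≤ C) ∧
      (∀ n : ℤ, ‖χ n‖ ≤ B) ∧
      (∀ w : ℤ → Euc d,
        (∀ n : ℤ, w (n + 1) = A n (w n) - f n (x n) + g n (w n + x n)) →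
        (∃ C : ℝ, ∀ n : ℤ, ‖w n‖ ≤ C) → w = χ) := by
  classical
  have hK0 : (0:ℝ) < K := lt_of_lt_of_le one_pos hK
  -- the weight kernel
  set E : ℤ → ℤ → ℝ := fun n m =>
    if m < n then K * Real.exp (-(S a (m + 1) n)) else K * Real.exp (-(S a n (m + 1)))
    with hEdef
  have hNE : ∀ (n : ℤ) (g0 : ℤ → ℝ) (m : ℤ), Nterm K a n g0 m = E n m * g0 m := by
    intro n g0 m
    simp only [Nterm, hEdef]
    split <;> ring
  have hE0 : ∀ n m : ℤ, 0 ≤ E n m := by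
    intro n m
    simp only [hEdef]
    split <;> exact mul_nonneg hK0.le (Real.exp_pos _).le
  have hGb : ∀ n m : ℤ, ‖Green W P n (m + 1)‖ ≤ E n m := by
    intro n m
    simp only [Green, hEdef]
    by_cases hmn : m < n
    · rw [if_pos (by omega : m + 1 ≤ n), if_pos hmn]
      exact hged1 (m + 1) n (by omega)
    · rw [if_neg (by omega : ¬ (m + 1 ≤ n)), if_neg hmn, norm_neg]
      exact hged2 (m + 1) n (by omega)
  -- the nonlinearity of the auxiliary system
  set h : ℤ → Euc d → Euc d := fun n v => g n (v + x n) - f n (x n) with hhdef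
  have hF0 : ∀ n : ℤ, 0 ≤ F n := fun n => le_trans (norm_nonneg _) (hF n 0)
  have hG0 : ∀ n : ℤ, 0 ≤ G n := fun n => le_trans (norm_nonneg _) (hG n 0)
  have hhb : ∀ (n : ℤ) (v : Euc d), ‖h n v‖ ≤ G n + F n := by
    intro n v
    exact le_trans (norm_sub_le _ _) (add_le_add (hG n _) (hF n _))
  have hhl : ∀ (n : ℤ) (v v' : Euc d), ‖h n v - h n v'‖ ≤ r n * ‖v - v'‖ := by
    intro n v v'
    have e : h n v - h n v' = g n (v + x n) - g n (v' + x n) := by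
      simp only [hhdef]; abel
    rw [e]
    have := hglip n (v + x n) (v' + x n)
    simpa [add_sub_add_right_eq_sub] using this
  -- the fixed point operator
  have hterm_norm : ∀ (w : ℤ → Euc d) (n m : ℤ),
      ‖Green W P n (m + 1) (h m (w m))‖ ≤ Nterm K a n (fun m => G m + F m) m := by
    intro w n m
    rw [hNE]
    calc ‖Green W P n (m + 1) (h m (w m))‖ ≤ ‖Green W P n (m + 1)‖ * ‖h m (w m)‖ :=
          le_opNorm _ _
      _ ≤ E n m * (G m + F m) :=
          mul_le_mul (hGb n m) (hhb m (w m)) (norm_nonneg _) (hE0 n m)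
  have hsum_norm : ∀ (w : ℤ → Euc d) (n : ℤ),
      Summable (fun m => ‖Green W P n (m + 1) (h m (w m))‖) := fun w n =>
    Summable.of_nonneg_of_le (fun m => norm_nonneg _) (hterm_norm w n) (hFGsum n)
  have hsum : ∀ (w : ℤ → Euc d) (n : ℤ),
      Summable (fun m => Green W P n (m + 1) (h m (w m))) := fun w n =>
    (hsum_norm w n).of_norm
  set T : (ℤ → Euc d) → ℤ → Euc d := fun w n => ∑' m, Green W P n (m + 1) (h m (w m))
    with hTdef
  have hNmapFG0 : ∀ n : ℤ, 0 ≤ Nmap K a n (fun m => G m + F m) := by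
    intro n
    exact tsum_nonneg fun m => by
      rw [hNE]; exact mul_nonneg (hE0 n m) (add_nonneg (hG0 m) (hF0 m))
  have hB0 : (0:ℝ) ≤ B := le_trans (hNmapFG0 0) (hH2 0)
  have hθ0 : (0:ℝ) ≤ θ := by
    refine le_trans ?_ (hH3 0)
    exact tsum_nonneg fun m => by rw [hNE]; exact mul_nonneg (hE0 0 m) (hrpos m)
  have hTB : ∀ (w : ℤ → Euc d) (n : ℤ), ‖T w n‖ ≤ B := by
    intro w n
    calc ‖T w n‖ ≤ ∑' m, ‖Green W P n (m + 1) (h m (w m))‖ :=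
          norm_tsum_le_tsum_norm (hsum_norm w n)
      _ ≤ ∑' m, Nterm K a n (fun m => G m + F m) m :=
          Summable.tsum_le_tsum (hterm_norm w n) (hsum_norm w n) (hFGsum n)
      _ ≤ B := hH2 n
  -- Green function one-step identity
  have hWapp : ∀ (n : ℤ) (y : Euc d), W (n + 1) y = A n (W n y) := by
    intro n y; rw [hW n]; rfl
  have hGstep : ∀ (n m : ℤ) (v : Euc d),
      Green W P (n + 1) m v = A n (Green W P n m v) + (if m = n + 1 then v else 0) := by
    intro n m v
    simp only [Green]
    by_cases h1 : m ≤ n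
    · rw [if_pos (show m ≤ n + 1 by omega), if_pos h1, if_neg (show ¬ m = n + 1 by omega),
        add_zero]
      simp only [ContinuousLinearMap.comp_apply, ContinuousLinearEquiv.coe_coe]
      exact hWapp n _
    · by_cases h2 : m = n + 1
      · subst h2
        rw [if_pos le_rfl, if_neg h1, if_pos rfl]
        have hv : W (n + 1) ((W (n + 1)).symm v) = v := (W (n + 1)).apply_symm_apply v
        simp only [ContinuousLinearMap.neg_apply, ContinuousLinearMap.comp_apply,
          ContinuousLinearEquiv.coe_coe, ContinuousLinearMap.sub_apply,
          ContinuousLinearMap.one_apply]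
        rw [map_neg (A n), ← hWapp n, map_sub (W (n + 1)), hv]
        abel
      · rw [if_neg (show ¬ m ≤ n + 1 by omega), if_neg h1, if_neg h2, add_zero]
        simp only [ContinuousLinearMap.neg_apply, ContinuousLinearMap.comp_apply,
          ContinuousLinearEquiv.coe_coe]
        rw [map_neg (A n), ← hWapp n]
  -- the operator maps to solutions of the shifted recurrence
  have hTrec : ∀ (w : ℤ → Euc d) (n : ℤ), T w (n + 1) = A n (T w n) + h n (w n) := by
    intro w n
    have hs1 : Summable (fun m => A n (Green W P n (m + 1) (h m (w m)))) :=
      (hsum w n).mapL (A n : Euc d →L[ℝ] Euc d)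
    have hs2 : Summable (fun m : ℤ => if m = n then h n (w n) else 0) :=
      summable_of_ne_finset_zero (s := {n}) (fun m hm => if_neg (by simpa using hm))
    calc T w (n + 1)
        = ∑' m, (A n (Green W P n (m + 1) (h m (w m))) + if m = n then h n (w n) else 0) := by
          simp only [hTdef]
          apply tsum_congr; intro m
          rw [hGstep n (m + 1) (h m (w m))]
          congr 1
          by_cases hm : m = n
          · subst hm; simp
          · rw [if_neg (show ¬ m + 1 = n + 1 by omega), if_neg hm]
      _ = (∑' m, A n (Green W P n (m + 1) (h m (w m))))
            + ∑' m, (if m = n then h n (w n) else 0) := Summable.tsum_add hs1 hs2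
      _ = A n (T w n) + h n (w n) := by
          rw [tsum_ite_eq, ← ContinuousLinearEquiv.map_tsum (A n)]
  -- Lipschitz estimate for the operator
  have hTlippt : ∀ (w w' : ℤ → Euc d) (D : ℝ), 0 ≤ D → (∀ m, ‖w m - w' m‖ ≤ D) →
      ∀ n, ‖T w n - T w' n‖ ≤ θ * D := by
    intro w w' D hD0 hDm n
    have hbnd : ∀ m, ‖Green W P n (m + 1) (h m (w m) - h m (w' m))‖ ≤ Nterm K a n r m * D := by
      intro m
      calc ‖Green W P n (m + 1) (h m (w m) - h m (w' m))‖
          ≤ ‖Green W P n (m + 1)‖ * ‖h m (w m) - h m (w' m)‖ := le_opNorm _ _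
        _ ≤ E n m * (r m * D) := by
            refine mul_le_mul (hGb n m) ?_ (norm_nonneg _) (hE0 n m)
            exact (hhl m _ _).trans (mul_le_mul_of_nonneg_left (hDm m) (hrpos m))
        _ = Nterm K a n r m * D := by rw [hNE]; ring
    have hsD : Summable (fun m => Nterm K a n r m * D) := (hrsum n).mul_right D
    have hsnrm : Summable (fun m => ‖Green W P n (m + 1) (h m (w m) - h m (w' m))‖) :=
      Summable.of_nonneg_of_le (fun _ => norm_nonneg _) hbnd hsD
    calc ‖T w n - T w' n‖
        = ‖∑' m, Green W P n (m + 1) (h m (w m) - h m (w' m))‖ := by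
          simp only [hTdef]
          rw [← Summable.tsum_sub (hsum w n) (hsum w' n)]
          congr 1
          exact tsum_congr fun m => (map_sub _ _ _).symm
      _ ≤ ∑' m, ‖Green W P n (m + 1) (h m (w m) - h m (w' m))‖ := norm_tsum_le_tsum_norm hsnrm
      _ ≤ ∑' m, Nterm K a n r m * D := Summable.tsum_le_tsum hbnd hsnrm hsD
      _ = Nmap K a n r * D := by rw [tsum_mul_right]; rfl
      _ ≤ θ * D := mul_le_mul_of_nonneg_right (hH3 n) hD0
  -- the contraction on bounded functions
  set T' : BoundedContinuousFunction ℤ (Euc d) → BoundedContinuousFunction ℤ (Euc d) :=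
    fun u => BoundedContinuousFunction.ofNormedAddCommGroup (fun n => T (⇑u) n)
      continuous_of_discreteTopology B (hTB ⇑u) with hT'def
  have hT'app : ∀ (u : BoundedContinuousFunction ℤ (Euc d)) (n : ℤ), T' u n = T (⇑u) n :=
    fun u n => rfl
  have hlip : LipschitzWith ⟨θ, hθ0⟩ T' := by
    apply LipschitzWith.of_dist_le_mul
    intro u u'
    show dist (T' u) (T' u') ≤ θ * dist u u'
    have hd0 : (0:ℝ) ≤ θ * dist u u' := mul_nonneg hθ0 dist_nonneg
    rw [BoundedContinuousFunction.dist_le hd0]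
    intro n
    rw [dist_eq_norm, hT'app, hT'app]
    exact hTlippt (⇑u) (⇑u') (dist u u') dist_nonneg
      (fun m => by rw [← dist_eq_norm]; exact BoundedContinuousFunction.dist_coe_le_dist m) n
  have hcontr : ContractingWith ⟨θ, hθ0⟩ T' := ⟨by exact_mod_cast hθ, hlip⟩
  set χ' : BoundedContinuousFunction ℤ (Euc d) := ContractingWith.fixedPoint T' hcontr
    with hχ'def
  have hfix : T' χ' = χ' := hcontr.fixedPoint_isFixedPt
  have hχfix : ∀ n : ℤ, T (⇑χ') n = χ' n := by
    intro n
    have := congrArg (fun u : BoundedContinuousFunction ℤ (Euc d) => u n) hfix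
    simpa [hT'app] using this
  refine ⟨⇑χ', ?_, ⟨B, ?_⟩, ?_, ?_⟩
  · intro n
    have h1 : χ' (n + 1) = A n (χ' n) + h n (χ' n) := by
      rw [← hχfix (n + 1), hTrec (⇑χ') n, hχfix n]
    rw [h1]
    simp only [hhdef]
    abel
  · intro n; rw [← hχfix n]; exact hTB _ n
  · intro n; rw [← hχfix n]; exact hTB _ n
  -- uniqueness
  · intro w hwrec hwbd
    obtain ⟨C, hC⟩ := hwbd
    have hwrec' : ∀ n : ℤ, w (n + 1) = A n (w n) + h n (w n) := by
      intro n; rw [hwrec n]; simp only [hhdef]; abel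
    have hδrec : ∀ n : ℤ, w (n + 1) - T w (n + 1) = A n (w n - T w n) := by
      intro n
      rw [hwrec' n, hTrec w n, map_sub (A n)]
      abel
    set c : Euc d := (W 0).symm (w 0 - T w 0) with hcdef
    have hδW : ∀ n : ℤ, w n - T w n = W n c := by
      intro n
      induction n using Int.induction_on with
      | zero => simp [hcdef]
      | succ k ih =>
        rw [hδrec k, ih]
        exact (hWapp k c).symm
      | pred k ih =>
        have hk : (-(k:ℤ) - 1 + 1) = -(k:ℤ) := by ring
        have h1 := hδrec (-(k:ℤ) - 1)
        rw [hk] at h1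
        have h2 : A (-(k:ℤ) - 1) (w (-(k:ℤ) - 1) - T w (-(k:ℤ) - 1))
            = A (-(k:ℤ) - 1) (W (-(k:ℤ) - 1) c) := by
          rw [← h1, ← hWapp (-(k:ℤ) - 1) c, hk]
          exact_mod_cast ih
        have h3 := (A (-(k:ℤ) - 1)).injective h2
        convert h3 using 2 <;> push_cast <;> ring
    have hδC : ∀ n : ℤ, ‖w n - T w n‖ ≤ C + B :=
      fun n => (norm_sub_le _ _).trans (add_le_add (hC n) (hTB w n))
    have hCB0 : (0:ℝ) ≤ C + B := le_trans (norm_nonneg _) (hδC 0)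
    -- the (1-P) part of c vanishes
    have hQc : (1 - P) c = 0 := by
      have key : ∀ n : ℤ, 0 < n →
          ‖(W 0 : Euc d →L[ℝ] Euc d) ((1 - P) c)‖ ≤ K * Real.exp (-(S a 0 n)) * (C + B) := by
        intro n hn
        have keq : ((W 0 : Euc d →L[ℝ] Euc d) ∘L (1 - P) ∘L ((W n).symm : Euc d →L[ℝ] Euc d))
            (w n - T w n) = (W 0 : Euc d →L[ℝ] Euc d) ((1 - P) c) := by
          rw [hδW n]
          simp only [ContinuousLinearMap.comp_apply, ContinuousLinearEquiv.coe_coe,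
            ContinuousLinearEquiv.symm_apply_apply]
        rw [← keq]
        calc ‖((W 0 : Euc d →L[ℝ] Euc d) ∘L (1 - P) ∘L ((W n).symm : Euc d →L[ℝ] Euc d))
              (w n - T w n)‖
            ≤ ‖(W 0 : Euc d →L[ℝ] Euc d) ∘L (1 - P) ∘L ((W n).symm : Euc d →L[ℝ] Euc d)‖
              * ‖w n - T w n‖ := le_opNorm _ _
          _ ≤ (K * Real.exp (-(S a 0 n))) * (C + B) :=
              mul_le_mul (hged2 n 0 hn) (hδC n) (norm_nonneg _)
                (mul_nonneg hK0.le (Real.exp_pos _).le)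
      have hlim : Tendsto (fun n : ℤ => K * Real.exp (-(S a 0 n)) * (C + B)) atTop (nhds 0) := by
        have h1 : Tendsto (fun q : ℤ => -(S a 0 q)) atTop atBot :=
          tendsto_neg_atBot_iff.mpr (hdiv1 0)
        have h2 : Tendsto (fun q : ℤ => Real.exp (-(S a 0 q))) atTop (nhds 0) :=
          Real.tendsto_exp_atBot.comp h1
        simpa using (h2.const_mul K).mul_const (C + B)
      have hle : ‖(W 0 : Euc d →L[ℝ] Euc d) ((1 - P) c)‖ ≤ 0 := by
        apply ge_of_tendsto hlim
        filter_upwards [eventually_ge_atTop 1] with n hn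
        exact key n (by omega)
      have h0 : (W 0 : Euc d →L[ℝ] Euc d) ((1 - P) c) = 0 := norm_le_zero_iff.mp hle
      have := congrArg (W 0).symm h0
      simpa using this
    -- the P part of c vanishes
    have hPc : P c = 0 := by
      have key : ∀ m : ℤ, m ≤ 0 →
          ‖(W 0 : Euc d →L[ℝ] Euc d) (P c)‖ ≤ K * Real.exp (-(S a m 0)) * (C + B) := by
        intro m hm
        have keq : ((W 0 : Euc d →L[ℝ] Euc d) ∘L P ∘L ((W m).symm : Euc d →L[ℝ] Euc d))
            (w m - T w m) = (W 0 : Euc d →L[ℝ] Euc d) (P c) := by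
          rw [hδW m]
          simp only [ContinuousLinearMap.comp_apply, ContinuousLinearEquiv.coe_coe,
            ContinuousLinearEquiv.symm_apply_apply]
        rw [← keq]
        calc ‖((W 0 : Euc d →L[ℝ] Euc d) ∘L P ∘L ((W m).symm : Euc d →L[ℝ] Euc d))
              (w m - T w m)‖
            ≤ ‖(W 0 : Euc d →L[ℝ] Euc d) ∘L P ∘L ((W m).symm : Euc d →L[ℝ] Euc d)‖
              * ‖w m - T w m‖ := le_opNorm _ _
          _ ≤ (K * Real.exp (-(S a m 0))) * (C + B) :=
              mul_le_mul (hged1 m 0 hm) (hδC m) (norm_nonneg _)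
                (mul_nonneg hK0.le (Real.exp_pos _).le)
      have hlim : Tendsto (fun m : ℤ => K * Real.exp (-(S a m 0)) * (C + B)) atBot (nhds 0) := by
        have h1 : Tendsto (fun p : ℤ => -(S a p 0)) atBot atBot :=
          tendsto_neg_atBot_iff.mpr (hdiv2 0)
        have h2 : Tendsto (fun p : ℤ => Real.exp (-(S a p 0))) atBot (nhds 0) :=
          Real.tendsto_exp_atBot.comp h1
        simpa using (h2.const_mul K).mul_const (C + B)
      have hle : ‖(W 0 : Euc d →L[ℝ] Euc d) (P c)‖ ≤ 0 := by
        apply ge_of_tendsto hlim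
        filter_upwards [eventually_le_atBot 0] with m hm
        exact key m hm
      have h0 : (W 0 : Euc d →L[ℝ] Euc d) (P c) = 0 := norm_le_zero_iff.mp hle
      have := congrArg (W 0).symm h0
      simpa using this
    have hc0 : c = 0 := by
      have h1 : c - P c = 0 := by
        simpa [ContinuousLinearMap.sub_apply, ContinuousLinearMap.one_apply] using hQc
      calc c = (c - P c) + P c := by abel
        _ = 0 := by rw [h1, hPc, add_zero]
    have hwT : ∀ n : ℤ, w n = T w n := by
      intro n
      have h1 := hδW n
      rw [hc0, map_zero] at h1
      exact sub_eq_zero.mp h1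
    have hwB : ∀ n : ℤ, ‖w n‖ ≤ B := fun n => (hwT n) ▸ hTB w n
    set w' : BoundedContinuousFunction ℤ (Euc d) :=
      BoundedContinuousFunction.ofNormedAddCommGroup w continuous_of_discreteTopology B hwB
      with hw'def
    have hw'fix : Function.IsFixedPt T' w' := by
      show T' w' = w'
      apply BoundedContinuousFunction.ext
      intro n
      rw [hT'app]
      show T (⇑w') n = w n
      have hcoe : ⇑w' = w := rfl
      rw [hcoe]
      exact (hwT n).symm
    have hweq : w' = χ' := hcontr.fixedPoint_unique hw'fix
    funext n
    have := congrArg (fun u : BoundedContinuousFunction ℤ (Euc d) => u n) hweq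
    exact this
end

section
/- Under the hypotheses of the existence of the unique bounded solution $\chi(\cdot;(m,\xi))$ of $w_{n+1} = A_n w_n - f(n,x(n,m,\xi)) + g(n, w_n + x(n,m,\xi))$, the flow-invariance identity $\chi(n;(m,\xi)) = \chi(n;(n, x(n,m,\xi)))$ holds for all $n, m \in \mathbb{Z}$. -/
open Finset Filter ContinuousLinearMap

theorem flow_invariance_identity {d : ℕ}
    (A W : ℤ → Euc d ≃L[ℝ] Euc d)
    (hW : ∀ n : ℤ, W (n + 1) = (W n).trans (A n))
    (P : Euc d →L[ℝ] Euc d) (hP : P ∘L P = P)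
    (K : ℝ) (hK : 1 ≤ K)
    (a : ℤ → ℝ) (ha : ∀ j : ℤ, 0 ≤ a j)
    (hdiv1 : ∀ p : ℤ, Tendsto (fun q : ℤ => ∑ j ∈ Finset.Icc p q, a j) atTop atTop)
    (hdiv2 : ∀ q : ℤ, Tendsto (fun p : ℤ => ∑ j ∈ Finset.Icc p q, a j) atBot atTop)
    (hged1 : ∀ m n : ℤ, m ≤ n →
      ‖(W n : Euc d →L[ℝ] Euc d) ∘L P ∘L ((W m).symm : Euc d →L[ℝ] Euc d)‖
        ≤ K * Real.exp (-(S a m n)))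
    (hged2 : ∀ m n : ℤ, n < m →
      ‖(W n : Euc d →L[ℝ] Euc d) ∘L (1 - P) ∘L ((W m).symm : Euc d →L[ℝ] Euc d)‖
        ≤ K * Real.exp (-(S a n m)))
    (f g : ℤ → Euc d → Euc d) (F G r : ℤ → ℝ) (B θ : ℝ)
    (hF : ∀ (n : ℤ) (x : Euc d), ‖f n x‖ ≤ F n)
    (hG : ∀ (n : ℤ) (x : Euc d), ‖g n x‖ ≤ G n)
    (hFGsum : ∀ n : ℤ, Summable (Nterm K a n (fun m => G m + F m)))
    (hH2 : ∀ n : ℤ, Nmap K a n (fun m => G m + F m) ≤ B)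
    (hrpos : ∀ n : ℤ, 0 ≤ r n)
    (hflip : ∀ (n : ℤ) (x₁ x₂ : Euc d), ‖f n x₁ - f n x₂‖ ≤ r n * ‖x₁ - x₂‖)
    (hglip : ∀ (n : ℤ) (x₁ x₂ : Euc d), ‖g n x₁ - g n x₂‖ ≤ r n * ‖x₁ - x₂‖)
    (hrsum : ∀ n : ℤ, Summable (Nterm K a n r))
    (hH3 : ∀ n : ℤ, Nmap K a n r ≤ θ) (hθ : θ < 1)
    (xSol : ℤ → Euc d → ℤ → Euc d)
    (hxSol : ∀ (m : ℤ) (ξ : Euc d), ∀ n : ℤ,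
      xSol m ξ (n + 1) = A n (xSol m ξ n) + f n (xSol m ξ n))
    (hxInit : ∀ (m : ℤ) (ξ : Euc d), xSol m ξ m = ξ)
    (hxUniq : ∀ (m : ℤ) (ξ : Euc d) (z : ℤ → Euc d),
      (∀ n : ℤ, z (n + 1) = A n (z n) + f n (z n)) → z m = ξ → z = xSol m ξ)
    (chi : ℤ → Euc d → ℤ → Euc d)
    (hchiSol : ∀ (m : ℤ) (ξ : Euc d), ∀ n : ℤ,
      chi m ξ (n + 1) = A n (chi m ξ n) - f n (xSol m ξ n) + g n (chi m ξ n + xSol m ξ n))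
    (hchiBdd : ∀ (m : ℤ) (ξ : Euc d), ∃ C : ℝ, ∀ n : ℤ, ‖chi m ξ n‖ ≤ C)
    (hchiUniq : ∀ (m : ℤ) (ξ : Euc d) (w : ℤ → Euc d),
      (∀ n : ℤ, w (n + 1) = A n (w n) - f n (xSol m ξ n) + g n (w n + xSol m ξ n)) →
      (∃ C : ℝ, ∀ n : ℤ, ‖w n‖ ≤ C) → w = chi m ξ) :
    ∀ (n m : ℤ) (ξ : Euc d), chi m ξ n = chi n (xSol m ξ n) n := by
  intro n m ξ
  have hx : xSol m ξ = xSol n (xSol m ξ n) :=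
    hxUniq n (xSol m ξ n) (xSol m ξ) (hxSol m ξ) rfl
  have h : chi m ξ = chi n (xSol m ξ n) := by
    apply hchiUniq
    · intro k
      rw [← hx]
      exact hchiSol m ξ k
    · exact hchiBdd m ξ
  rw [h]
end

section
/- Under hypotheses (H1)–(H3), there exists a unique map $H:\mathbb{Z}\times\mathbb{R}^d\to\mathbb{R}^d$ such that (a) $|H(n,\xi)-\xi| \leq B$ for all $(n,\xi)$, and (b) for every solution $x_n$ of $x_{n+1}=A_nx_n+f(n,x_n)$, the sequence $H[n,x_n]$ is a solution of $y_{n+1}=A_ny_n+g(n,y_n)$. Explicitly, $H(n,\xi)=\xi+\chi(n;(n,\xi))$. -/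
open Finset Filter ContinuousLinearMap

/-- A conjugating map: it moves points a distance at most `B` and sends solutions of the
`f`-perturbed system to solutions of the `g`-perturbed system. -/
def GoodMap {d : ℕ} (A : ℤ → Euc d ≃L[ℝ] Euc d) (f g : ℤ → Euc d → Euc d) (B : ℝ)
    (H : ℤ → Euc d → Euc d) : Prop :=
  (∀ (n : ℤ) (ξ : Euc d), ‖H n ξ - ξ‖ ≤ B) ∧
  ∀ x : ℤ → Euc d, (∀ n : ℤ, x (n + 1) = A n (x n) + f n (x n)) →
    ∀ n : ℤ, H (n + 1) (x (n + 1)) = A n (H n (x n)) + g n (H n (x n))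

/-- Variation of constants formula. -/
lemma voc_formula {d : ℕ} (A W : ℤ → Euc d ≃L[ℝ] Euc d)
    (hW : ∀ n : ℤ, W (n + 1) = (W n).trans (A n))
    (w h : ℤ → Euc d) (hw : ∀ n : ℤ, w (n + 1) = A n (w n) + h n) :
    ∀ p n : ℤ, p ≤ n → w n = W n ((W p).symm (w p)) +
      ∑ j ∈ Finset.Icc p (n - 1), W n ((W (j + 1)).symm (h j)) := by
  intro p n hpn
  refine Int.le_induction (motive := fun n _ => w n = W n ((W p).symm (w p)) +
      ∑ j ∈ Finset.Icc p (n - 1), W n ((W (j + 1)).symm (h j))) ?_ ?_ n hpn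
  · show w p = W p ((W p).symm (w p)) + ∑ j ∈ Finset.Icc p (p - 1), W p ((W (j + 1)).symm (h j))
    rw [Finset.Icc_eq_empty (by omega), Finset.sum_empty, add_zero,
      ContinuousLinearEquiv.apply_symm_apply]
  · intro n hpn ih
    have hA : ∀ z : Euc d, A n (W n z) = W (n + 1) z := fun z => by
      rw [hW n]; rfl
    have hins : Finset.Icc p (n + 1 - 1) = insert n (Finset.Icc p (n - 1)) := by
      ext j; simp only [Finset.mem_Icc, Finset.mem_insert]; omega
    rw [hw n, ih, hins, Finset.sum_insert (by simp only [Finset.mem_Icc]; omega),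
      map_add, map_sum]
    simp only [hA]
    rw [ContinuousLinearEquiv.apply_symm_apply]
    abel

lemma Nterm_nonneg {K : ℝ} (hK : 0 ≤ K) {a : ℤ → ℝ} {n : ℤ} {g : ℤ → ℝ}
    (hg : ∀ m, 0 ≤ g m) (m : ℤ) : 0 ≤ Nterm K a n g m := by
  unfold Nterm
  split <;> exact mul_nonneg (mul_nonneg hK (Real.exp_pos _).le) (hg m)

/-- Any bounded solution of the inhomogeneous equation satisfies the `Nmap` bound. -/
lemma bounded_sol_le_Nmap {d : ℕ} (A W : ℤ → Euc d ≃L[ℝ] Euc d)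
    (hW : ∀ n : ℤ, W (n + 1) = (W n).trans (A n))
    (P : Euc d →L[ℝ] Euc d) (K : ℝ) (hK : 1 ≤ K) (a : ℤ → ℝ)
    (hdiv1 : ∀ p : ℤ, Tendsto (fun q : ℤ => ∑ j ∈ Finset.Icc p q, a j) atTop atTop)
    (hdiv2 : ∀ q : ℤ, Tendsto (fun p : ℤ => ∑ j ∈ Finset.Icc p q, a j) atBot atTop)
    (hged1 : ∀ m n : ℤ, m ≤ n →
      ‖(W n : Euc d →L[ℝ] Euc d) ∘L P ∘L ((W m).symm : Euc d →L[ℝ] Euc d)‖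
        ≤ K * Real.exp (-(S a m n)))
    (hged2 : ∀ m n : ℤ, n < m →
      ‖(W n : Euc d →L[ℝ] Euc d) ∘L (1 - P) ∘L ((W m).symm : Euc d →L[ℝ] Euc d)‖
        ≤ K * Real.exp (-(S a n m)))
    (GF : ℤ → ℝ) (hGF0 : ∀ m : ℤ, 0 ≤ GF m) (hsum : ∀ n : ℤ, Summable (Nterm K a n GF))
    (w h : ℤ → Euc d) (hw : ∀ n : ℤ, w (n + 1) = A n (w n) + h n)
    (hh : ∀ n : ℤ, ‖h n‖ ≤ GF n) (C : ℝ) (hC : ∀ n : ℤ, ‖w n‖ ≤ C) :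
    ∀ n : ℤ, ‖w n‖ ≤ Nmap K a n GF := by
  intro n
  have hC0 : 0 ≤ C := le_trans (norm_nonneg _) (hC 0)
  have hK0 : (0 : ℝ) ≤ K := le_trans zero_le_one hK
  -- the key finite-window estimate
  have key : ∀ p q : ℤ, p ≤ n → n ≤ q →
      ‖w n‖ ≤ K * Real.exp (-(S a p n)) * C + K * Real.exp (-(S a n (q + 1))) * C
        + Nmap K a n GF := by
    intro p q hp hq
    have voc1 := voc_formula A W hW w h hw p n hp
    have voc2 := voc_formula A W hW w h hw n (q + 1) (by omega)
    rw [show q + 1 - 1 = q from by ring] at voc2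
    -- decomposition of w n
    have hdecomp : w n = W n (P ((W n).symm (w n))) + W n ((1 - P) ((W n).symm (w n))) := by
      rw [← map_add]
      have : ∀ y : Euc d, P y + (1 - P) y = y := fun y => by
        simp [ContinuousLinearMap.sub_apply]
      rw [this, ContinuousLinearEquiv.apply_symm_apply]
    -- stable part
    have hPterm : W n (P ((W n).symm (w n))) =
        ((W n : Euc d →L[ℝ] Euc d) ∘L P ∘L ((W p).symm : Euc d →L[ℝ] Euc d)) (w p) +
        ∑ j ∈ Finset.Icc p (n - 1),
          ((W n : Euc d →L[ℝ] Euc d) ∘L P ∘L ((W (j + 1)).symm : Euc d →L[ℝ] Euc d)) (h j) := by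
      rw [voc1]
      simp [ContinuousLinearMap.comp_apply, map_add, map_sum,
        ContinuousLinearEquiv.symm_apply_apply]
    -- unstable part
    have hQterm : W n ((1 - P) ((W n).symm (w n))) =
        ((W n : Euc d →L[ℝ] Euc d) ∘L (1 - P) ∘L ((W (q + 1)).symm : Euc d →L[ℝ] Euc d)) (w (q + 1)) -
        ∑ j ∈ Finset.Icc n q,
          ((W n : Euc d →L[ℝ] Euc d) ∘L (1 - P) ∘L ((W (j + 1)).symm : Euc d →L[ℝ] Euc d)) (h j) := by
      rw [voc2]
      simp [ContinuousLinearMap.comp_apply, map_add, map_sum,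
        ContinuousLinearEquiv.symm_apply_apply]
    -- norm estimates
    have hPn : ‖W n (P ((W n).symm (w n)))‖ ≤ K * Real.exp (-(S a p n)) * C +
        ∑ j ∈ Finset.Icc p (n - 1), Nterm K a n GF j := by
      rw [hPterm]
      refine le_trans (norm_add_le _ _) (add_le_add ?_ ?_)
      · exact le_trans (ContinuousLinearMap.le_opNorm _ _)
          (mul_le_mul (hged1 p n hp) (hC p) (norm_nonneg _)
            (le_trans (norm_nonneg _) (hged1 p n hp)))
      · refine le_trans (norm_sum_le _ _) (Finset.sum_le_sum ?_)
        intro j hj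
        rw [Finset.mem_Icc] at hj
        have hjn : j < n := by omega
        have : Nterm K a n GF j = K * Real.exp (-(S a (j + 1) n)) * GF j := by
          unfold Nterm; rw [if_pos hjn]
        rw [this]
        exact le_trans (ContinuousLinearMap.le_opNorm _ _)
          (mul_le_mul (hged1 (j + 1) n (by omega)) (hh j) (norm_nonneg _)
            (le_trans (norm_nonneg _) (hged1 (j + 1) n (by omega))))
    have hQn : ‖W n ((1 - P) ((W n).symm (w n)))‖ ≤ K * Real.exp (-(S a n (q + 1))) * C +
        ∑ j ∈ Finset.Icc n q, Nterm K a n GF j := by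
      rw [hQterm]
      refine le_trans (norm_sub_le _ _) (add_le_add ?_ ?_)
      · exact le_trans (ContinuousLinearMap.le_opNorm _ _)
          (mul_le_mul (hged2 (q + 1) n (by omega)) (hC (q + 1)) (norm_nonneg _)
            (le_trans (norm_nonneg _) (hged2 (q + 1) n (by omega))))
      · refine le_trans (norm_sum_le _ _) (Finset.sum_le_sum ?_)
        intro j hj
        rw [Finset.mem_Icc] at hj
        have hjn : ¬ (j < n) := by omega
        have : Nterm K a n GF j = K * Real.exp (-(S a n (j + 1))) * GF j := by
          unfold Nterm; rw [if_neg hjn]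
        rw [this]
        exact le_trans (ContinuousLinearMap.le_opNorm _ _)
          (mul_le_mul (hged2 (j + 1) n (by omega)) (hh j) (norm_nonneg _)
            (le_trans (norm_nonneg _) (hged2 (j + 1) n (by omega))))
    -- combine the two sums and bound by the full series
    have hsplit : ∑ j ∈ Finset.Icc p (n - 1), Nterm K a n GF j +
        ∑ j ∈ Finset.Icc n q, Nterm K a n GF j ≤ Nmap K a n GF := by
      have hunion : Finset.Icc p (n - 1) ∪ Finset.Icc n q = Finset.Icc p q := by
        ext j; simp only [Finset.mem_union, Finset.mem_Icc]; omega
      have hdisj : Disjoint (Finset.Icc p (n - 1)) (Finset.Icc n q) := by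
        rw [Finset.disjoint_left]
        intro j hj1 hj2
        rw [Finset.mem_Icc] at hj1 hj2
        omega
      rw [← Finset.sum_union hdisj, hunion]
      exact Summable.sum_le_tsum _ (fun i _ => Nterm_nonneg hK0 hGF0 i) (hsum n)
    calc ‖w n‖ = ‖W n (P ((W n).symm (w n))) + W n ((1 - P) ((W n).symm (w n)))‖ := by
            rw [← hdecomp]
      _ ≤ ‖W n (P ((W n).symm (w n)))‖ + ‖W n ((1 - P) ((W n).symm (w n)))‖ := norm_add_le _ _
      _ ≤ _ := by
            have := add_le_add hPn hQn
            linarith [hsplit]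
  -- now take limits p → -∞, q → ∞ along integer sequences
  have T1 : Tendsto (fun k : ℕ => K * Real.exp (-(S a (n - 1 - (k : ℤ)) n)) * C)
      atTop (nhds 0) := by
    have h1 : Tendsto (fun k : ℕ => n - 1 - (k : ℤ)) atTop atBot := by
      have hneg : Tendsto (fun k : ℕ => -(k : ℤ)) atTop atBot :=
        Filter.tendsto_neg_atBot_iff.mpr tendsto_natCast_atTop_atTop
      have := Filter.tendsto_atBot_add_const_left atTop (n - 1) hneg
      refine this.congr (fun k => by ring)
    have h2 : Tendsto (fun k : ℕ => S a (n - 1 - (k : ℤ)) n) atTop atTop := (hdiv2 n).comp h1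
    have h3 : Tendsto (fun k : ℕ => Real.exp (-(S a (n - 1 - (k : ℤ)) n))) atTop (nhds 0) :=
      Real.tendsto_exp_atBot.comp (Filter.tendsto_neg_atBot_iff.mpr h2)
    simpa using (h3.const_mul K).mul_const C
  have T2 : Tendsto (fun k : ℕ => K * Real.exp (-(S a n ((n + (k : ℤ)) + 1))) * C)
      atTop (nhds 0) := by
    have h1 : Tendsto (fun k : ℕ => (n + (k : ℤ)) + 1) atTop atTop := by
      have := Filter.tendsto_atTop_add_const_left atTop n
        (tendsto_natCast_atTop_atTop : Tendsto (fun k : ℕ => (k : ℤ)) atTop atTop)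
      exact Filter.tendsto_atTop_add_const_right atTop 1 this
    have h2 : Tendsto (fun k : ℕ => S a n ((n + (k : ℤ)) + 1)) atTop atTop := (hdiv1 n).comp h1
    have h3 : Tendsto (fun k : ℕ => Real.exp (-(S a n ((n + (k : ℤ)) + 1)))) atTop (nhds 0) :=
      Real.tendsto_exp_atBot.comp (Filter.tendsto_neg_atBot_iff.mpr h2)
    simpa using (h3.const_mul K).mul_const C
  have Tlim : Tendsto (fun k : ℕ => K * Real.exp (-(S a (n - 1 - (k : ℤ)) n)) * C +
      K * Real.exp (-(S a n ((n + (k : ℤ)) + 1))) * C + Nmap K a n GF) atTop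
      (nhds (0 + 0 + Nmap K a n GF)) :=
    (T1.add T2).add tendsto_const_nhds
  rw [zero_add, zero_add] at Tlim
  exact ge_of_tendsto' Tlim (fun k => key (n - 1 - (k : ℤ)) (n + (k : ℤ)) (by omega) (by omega))

theorem existence_uniqueness_of_H {d : ℕ}
    (A W : ℤ → Euc d ≃L[ℝ] Euc d)
    (hW : ∀ n : ℤ, W (n + 1) = (W n).trans (A n))
    (P : Euc d →L[ℝ] Euc d) (hP : P ∘L P = P)
    (K : ℝ) (hK : 1 ≤ K)
    (a : ℤ → ℝ) (ha : ∀ j : ℤ, 0 ≤ a j)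
    (hdiv1 : ∀ p : ℤ, Tendsto (fun q : ℤ => ∑ j ∈ Finset.Icc p q, a j) atTop atTop)
    (hdiv2 : ∀ q : ℤ, Tendsto (fun p : ℤ => ∑ j ∈ Finset.Icc p q, a j) atBot atTop)
    (hged1 : ∀ m n : ℤ, m ≤ n →
      ‖(W n : Euc d →L[ℝ] Euc d) ∘L P ∘L ((W m).symm : Euc d →L[ℝ] Euc d)‖
        ≤ K * Real.exp (-(S a m n)))
    (hged2 : ∀ m n : ℤ, n < m →
      ‖(W n : Euc d →L[ℝ] Euc d) ∘L (1 - P) ∘L ((W m).symm : Euc d →L[ℝ] Euc d)‖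
        ≤ K * Real.exp (-(S a n m)))
    (f g : ℤ → Euc d → Euc d) (F G r : ℤ → ℝ) (B θ : ℝ)
    (hF : ∀ (n : ℤ) (x : Euc d), ‖f n x‖ ≤ F n)
    (hG : ∀ (n : ℤ) (x : Euc d), ‖g n x‖ ≤ G n)
    (hFGsum : ∀ n : ℤ, Summable (Nterm K a n (fun m => G m + F m)))
    (hH2 : ∀ n : ℤ, Nmap K a n (fun m => G m + F m) ≤ B)
    (hrpos : ∀ n : ℤ, 0 ≤ r n)
    (hflip : ∀ (n : ℤ) (x₁ x₂ : Euc d), ‖f n x₁ - f n x₂‖ ≤ r n * ‖x₁ - x₂‖)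
    (hglip : ∀ (n : ℤ) (x₁ x₂ : Euc d), ‖g n x₁ - g n x₂‖ ≤ r n * ‖x₁ - x₂‖)
    (hrsum : ∀ n : ℤ, Summable (Nterm K a n r))
    (hH3 : ∀ n : ℤ, Nmap K a n r ≤ θ) (hθ : θ < 1)
    (xSol : ℤ → Euc d → ℤ → Euc d)
    (hxSol : ∀ (m : ℤ) (ξ : Euc d), ∀ n : ℤ,
      xSol m ξ (n + 1) = A n (xSol m ξ n) + f n (xSol m ξ n))
    (hxInit : ∀ (m : ℤ) (ξ : Euc d), xSol m ξ m = ξ)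
    (hxUniq : ∀ (m : ℤ) (ξ : Euc d) (z : ℤ → Euc d),
      (∀ n : ℤ, z (n + 1) = A n (z n) + f n (z n)) → z m = ξ → z = xSol m ξ)
    (chi : ℤ → Euc d → ℤ → Euc d)
    (hchiSol : ∀ (m : ℤ) (ξ : Euc d), ∀ n : ℤ,
      chi m ξ (n + 1) = A n (chi m ξ n) - f n (xSol m ξ n) + g n (chi m ξ n + xSol m ξ n))
    (hchiBdd : ∀ (m : ℤ) (ξ : Euc d), ∃ C : ℝ, ∀ n : ℤ, ‖chi m ξ n‖ ≤ C)
    (hchiUniq : ∀ (m : ℤ) (ξ : Euc d) (w : ℤ → Euc d),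
      (∀ n : ℤ, w (n + 1) = A n (w n) - f n (xSol m ξ n) + g n (w n + xSol m ξ n)) →
      (∃ C : ℝ, ∀ n : ℤ, ‖w n‖ ≤ C) → w = chi m ξ)
    :
    GoodMap A f g B (fun n ξ => ξ + chi n ξ n) ∧
    ∀ H' : ℤ → Euc d → Euc d, GoodMap A f g B H' → H' = fun n ξ => ξ + chi n ξ n := by
  have hGF0 : ∀ m : ℤ, 0 ≤ G m + F m := fun m =>
    add_nonneg (le_trans (norm_nonneg _) (hG m 0)) (le_trans (norm_nonneg _) (hF m 0))
  -- the crucial bound on chi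
  have chiBound : ∀ (m : ℤ) (ξ : Euc d) (n : ℤ), ‖chi m ξ n‖ ≤ B := by
    intro m ξ n
    obtain ⟨C, hC⟩ := hchiBdd m ξ
    have hrec : ∀ k : ℤ, chi m ξ (k + 1) = A k (chi m ξ k) +
        (g k (chi m ξ k + xSol m ξ k) - f k (xSol m ξ k)) := by
      intro k; rw [hchiSol m ξ k]; abel
    have hhb : ∀ k : ℤ, ‖g k (chi m ξ k + xSol m ξ k) - f k (xSol m ξ k)‖ ≤ G k + F k :=
      fun k => le_trans (norm_sub_le _ _) (add_le_add (hG _ _) (hF _ _))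
    exact le_trans
      (bounded_sol_le_Nmap A W hW P K hK a hdiv1 hdiv2 hged1 hged2
        (fun m => G m + F m) hGF0 hFGsum (chi m ξ)
        (fun k => g k (chi m ξ k + xSol m ξ k) - f k (xSol m ξ k)) hrec hhb C hC n)
      (hH2 n)
  constructor
  · constructor
    · intro n ξ
      simpa [add_sub_cancel_left] using chiBound n ξ n
    · intro x hx n
      have hx0 : xSol 0 (x 0) = x := (hxUniq 0 (x 0) x hx rfl).symm
      have hcoh : ∀ m : ℤ, chi m (x m) = chi 0 (x 0) := by
        intro m
        have hxm : xSol m (x m) = x := (hxUniq m (x m) x hx rfl).symm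
        refine (hchiUniq m (x m) (chi 0 (x 0)) ?_ (hchiBdd 0 (x 0))).symm
        intro k
        have h0 := hchiSol 0 (x 0) k
        rw [hx0] at h0
        rw [hxm]
        exact h0
      show x (n + 1) + chi (n + 1) (x (n + 1)) (n + 1)
          = A n (x n + chi n (x n) n) + g n (x n + chi n (x n) n)
      rw [hcoh (n + 1), hcoh n]
      have hwrec := hchiSol 0 (x 0) n
      rw [hx0] at hwrec
      rw [hx n, hwrec, map_add,
        show chi 0 (x 0) n + x n = x n + chi 0 (x 0) n from add_comm _ _]
      abel
  · intro H' hH'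
    obtain ⟨hb', hs'⟩ := hH'
    funext m ξ
    show H' m ξ = ξ + chi m ξ m
    have hw : (fun k => H' k (xSol m ξ k) - xSol m ξ k) = chi m ξ := by
      apply hchiUniq
      · intro k
        have h1 := hs' (xSol m ξ) (hxSol m ξ) k
        rw [h1, hxSol m ξ k, map_sub, sub_add_cancel]
        abel
      · exact ⟨B, fun k => hb' k (xSol m ξ k)⟩
    have h2 := congrFun hw m
    simp only [hxInit m ξ] at h2
    rw [← h2]
    abel
end

section
/- Under hypotheses (H1)–(H3), the maps $H(n,\xi)=\xi+\chi(n;(n,\xi))$ and $L(n,\nu)=\nu+\vartheta(n;(n,\nu))$ are mutually inverse: $L(n, H(n,\xi)) = \xi$ and $H(n, L(n,\nu)) = \nu$ for every $n \in \mathbb{Z}$ and $\xi, \nu \in \mathbb{R}^d$. More generally, for solutions $x(\cdot,m,\xi)$ of the $f$-system and $y(\cdot,m,\nu)$ of the $g$-system, $L[n, H[n, x(n,m,\xi)]] = x(n,m,\xi)$ and $H[n, L[n, y(n,m,\nu)]] = y(n,m,\nu)$. -/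
open Finset Filter ContinuousLinearMap

theorem H_and_L_are_mutually_inverse {d : ℕ}
    (A W : ℤ → Euc d ≃L[ℝ] Euc d)
    (hW : ∀ n : ℤ, W (n + 1) = (W n).trans (A n))
    (P : Euc d →L[ℝ] Euc d) (hP : P ∘L P = P)
    (K : ℝ) (hK : 1 ≤ K)
    (a : ℤ → ℝ) (ha : ∀ j : ℤ, 0 ≤ a j)
    (hdiv1 : ∀ p : ℤ, Tendsto (fun q : ℤ => ∑ j ∈ Finset.Icc p q, a j) atTop atTop)
    (hdiv2 : ∀ q : ℤ, Tendsto (fun p : ℤ => ∑ j ∈ Finset.Icc p q, a j) atBot atTop)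
    (hged1 : ∀ m n : ℤ, m ≤ n →
      ‖(W n : Euc d →L[ℝ] Euc d) ∘L P ∘L ((W m).symm : Euc d →L[ℝ] Euc d)‖
        ≤ K * Real.exp (-(S a m n)))
    (hged2 : ∀ m n : ℤ, n < m →
      ‖(W n : Euc d →L[ℝ] Euc d) ∘L (1 - P) ∘L ((W m).symm : Euc d →L[ℝ] Euc d)‖
        ≤ K * Real.exp (-(S a n m)))
    (f g : ℤ → Euc d → Euc d) (F G r : ℤ → ℝ) (B θ : ℝ)
    (hF : ∀ (n : ℤ) (x : Euc d), ‖f n x‖ ≤ F n)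
    (hG : ∀ (n : ℤ) (x : Euc d), ‖g n x‖ ≤ G n)
    (hFGsum : ∀ n : ℤ, Summable (Nterm K a n (fun m => G m + F m)))
    (hH2 : ∀ n : ℤ, Nmap K a n (fun m => G m + F m) ≤ B)
    (hrpos : ∀ n : ℤ, 0 ≤ r n)
    (hflip : ∀ (n : ℤ) (x₁ x₂ : Euc d), ‖f n x₁ - f n x₂‖ ≤ r n * ‖x₁ - x₂‖)
    (hglip : ∀ (n : ℤ) (x₁ x₂ : Euc d), ‖g n x₁ - g n x₂‖ ≤ r n * ‖x₁ - x₂‖)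
    (hrsum : ∀ n : ℤ, Summable (Nterm K a n r))
    (hH3 : ∀ n : ℤ, Nmap K a n r ≤ θ) (hθ : θ < 1)
    (xSol : ℤ → Euc d → ℤ → Euc d)
    (hxSol : ∀ (m : ℤ) (ξ : Euc d), ∀ n : ℤ,
      xSol m ξ (n + 1) = A n (xSol m ξ n) + f n (xSol m ξ n))
    (hxInit : ∀ (m : ℤ) (ξ : Euc d), xSol m ξ m = ξ)
    (hxUniq : ∀ (m : ℤ) (ξ : Euc d) (z : ℤ → Euc d),
      (∀ n : ℤ, z (n + 1) = A n (z n) + f n (z n)) → z m = ξ → z = xSol m ξ)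
    (chi : ℤ → Euc d → ℤ → Euc d)
    (hchiSol : ∀ (m : ℤ) (ξ : Euc d), ∀ n : ℤ,
      chi m ξ (n + 1) = A n (chi m ξ n) - f n (xSol m ξ n) + g n (chi m ξ n + xSol m ξ n))
    (hchiBdd : ∀ (m : ℤ) (ξ : Euc d), ∃ C : ℝ, ∀ n : ℤ, ‖chi m ξ n‖ ≤ C)
    (hchiUniq : ∀ (m : ℤ) (ξ : Euc d) (w : ℤ → Euc d),
      (∀ n : ℤ, w (n + 1) = A n (w n) - f n (xSol m ξ n) + g n (w n + xSol m ξ n)) →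
      (∃ C : ℝ, ∀ n : ℤ, ‖w n‖ ≤ C) → w = chi m ξ)
    (ySol : ℤ → Euc d → ℤ → Euc d)
    (hySol : ∀ (m : ℤ) (ν : Euc d), ∀ n : ℤ,
      ySol m ν (n + 1) = A n (ySol m ν n) + g n (ySol m ν n))
    (hyInit : ∀ (m : ℤ) (ν : Euc d), ySol m ν m = ν)
    (hyUniq : ∀ (m : ℤ) (ν : Euc d) (z : ℤ → Euc d),
      (∀ n : ℤ, z (n + 1) = A n (z n) + g n (z n)) → z m = ν → z = ySol m ν)
    (theta : ℤ → Euc d → ℤ → Euc d)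
    (hthetaSol : ∀ (m : ℤ) (ν : Euc d), ∀ n : ℤ,
      theta m ν (n + 1) = A n (theta m ν n) + f n (theta m ν n + ySol m ν n) - g n (ySol m ν n))
    (hthetaBdd : ∀ (m : ℤ) (ν : Euc d), ∃ C : ℝ, ∀ n : ℤ, ‖theta m ν n‖ ≤ C)
    (hthetaUniq : ∀ (m : ℤ) (ν : Euc d) (w : ℤ → Euc d),
      (∀ n : ℤ, w (n + 1) = A n (w n) + f n (w n + ySol m ν n) - g n (ySol m ν n)) →
      (∃ C : ℝ, ∀ n : ℤ, ‖w n‖ ≤ C) → w = theta m ν)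
    :
    (∀ (n : ℤ) (ξ : Euc d),
      (ξ + chi n ξ n) + theta n (ξ + chi n ξ n) n = ξ) ∧
    (∀ (n : ℤ) (ν : Euc d),
      (ν + theta n ν n) + chi n (ν + theta n ν n) n = ν) ∧
    (∀ (m n : ℤ) (ξ : Euc d),
      (xSol m ξ n + chi n (xSol m ξ n) n)
        + theta n (xSol m ξ n + chi n (xSol m ξ n) n) n = xSol m ξ n) ∧
    (∀ (m n : ℤ) (ν : Euc d),
      (ySol m ν n + theta n (ySol m ν n) n)
        + chi n (ySol m ν n + theta n (ySol m ν n) n) n = ySol m ν n) := by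

  have keyH : ∀ (n : ℤ) (ξ : Euc d), theta n (ξ + chi n ξ n) = fun k => - chi n ξ k := by
    intro n ξ
    set ν := ξ + chi n ξ n with hν
    have hy : ySol n ν = fun k => xSol n ξ k + chi n ξ k := by
      refine (hyUniq n ν _ ?_ ?_).symm ▸ rfl
      · intro k
        simp only [hxSol, hchiSol, map_add]
        abel
      · simp [hxInit, hν]
    refine (hthetaUniq n ν _ ?_ ?_).symm
    · intro k
      rw [hy]
      have : (fun m => - chi n ξ m) k + (xSol n ξ k + chi n ξ k) = xSol n ξ k := by module
      simp only [this, hchiSol, map_neg]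
      abel
    · obtain ⟨C, hC⟩ := hchiBdd n ξ
      exact ⟨C, fun k => by simpa using hC k⟩
  have keyL : ∀ (n : ℤ) (ν : Euc d), chi n (ν + theta n ν n) = fun k => - theta n ν k := by
    intro n ν
    set ξ := ν + theta n ν n with hξ
    have hx : xSol n ξ = fun k => ySol n ν k + theta n ν k := by
      refine (hxUniq n ξ _ ?_ ?_).symm ▸ rfl
      · intro k
        simp only [hySol, hthetaSol, map_add]
        abel
      · simp [hyInit, hξ]
    refine (hchiUniq n ξ _ ?_ ?_).symm
    · intro k
      rw [hx]
      have : (fun m => - theta n ν m) k + (ySol n ν k + theta n ν k) = ySol n ν k := by module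
      simp only [this, hthetaSol, map_neg]
      abel
    · obtain ⟨C, hC⟩ := hthetaBdd n ν
      exact ⟨C, fun k => by simpa using hC k⟩
  have h1 : ∀ (n : ℤ) (ξ : Euc d), (ξ + chi n ξ n) + theta n (ξ + chi n ξ n) n = ξ := by
    intro n ξ
    rw [keyH n ξ]
    abel_nf
    simp
  have h2 : ∀ (n : ℤ) (ν : Euc d), (ν + theta n ν n) + chi n (ν + theta n ν n) n = ν := by
    intro n ν
    rw [keyL n ν]
    abel_nf
    simp
  exact ⟨h1, h2, fun m n ξ => h1 n (xSol m ξ n), fun m n ν => h2 n (ySol m ν n)⟩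
end

section
/- If $\|A_n - I\| \leq M$ and the Lipschitz sequence satisfies $r_n \leq r$ (constant) and $N(n,r) \leq \theta < 1$, then $\Gamma(n,\ell) \leq \exp\big(2(M + r)\ell\big)\,\theta$ for all $n \in \mathbb{Z}$ and $\ell \in \mathbb{N}$, where $\Gamma(n,\ell)=\sum_{k=n-\ell}^{n-1}K\exp(-\sum_{p=k+1}^na_p)r_k\exp(\sum_{l=k}^{n-1}(\|A_l-I\|+r_l))+\sum_{k=n}^{n+\ell-1}K\exp(-\sum_{p=n}^{k+1}a_p)r_k\exp(\sum_{l=n}^{k-1}(\|A_l-I\|+r_l))$. -/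
open Finset Filter ContinuousLinearMap

/-- The quantity `Γ(n,ℓ)` appearing in the proof of strong topological equivalence. -/
noncomputable def Gamma {d : ℕ} (A : ℤ → Euc d →L[ℝ] Euc d) (K : ℝ) (a r : ℤ → ℝ)
    (n : ℤ) (ℓ : ℕ) : ℝ :=
  (∑ k ∈ Finset.Icc (n - ℓ) (n - 1),
    K * Real.exp (-(S a (k + 1) n)) * r k *
      Real.exp (∑ l ∈ Finset.Icc k (n - 1), (‖A l - 1‖ + r l)))
  + ∑ k ∈ Finset.Icc n (n + ℓ - 1),
    K * Real.exp (-(S a n (k + 1))) * r k *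
      Real.exp (∑ l ∈ Finset.Icc n (k - 1), (‖A l - 1‖ + r l))

theorem gamma_uniform_bound {d : ℕ}
    (A : ℤ → Euc d →L[ℝ] Euc d) (K : ℝ) (hK : 1 ≤ K)
    (a : ℤ → ℝ) (ha : ∀ j : ℤ, 0 ≤ a j)
    (M : ℝ) (hM : ∀ n : ℤ, ‖A n - 1‖ ≤ M)
    (r : ℤ → ℝ) (hrpos : ∀ n : ℤ, 0 ≤ r n)
    (rc : ℝ) (hrc : ∀ n : ℤ, r n ≤ rc)
    (θ : ℝ) (hθ : θ < 1)
    (hrsum : ∀ n : ℤ, Summable (Nterm K a n r))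
    (hNr : ∀ n : ℤ, Nmap K a n r ≤ θ) :
    ∀ (n : ℤ) (ℓ : ℕ), Gamma A K a r n ℓ ≤ Real.exp (2 * (M + rc) * ℓ) * θ := by
  have hK0 : (0 : ℝ) < K := lt_of_lt_of_le one_pos hK
  have hM0 : 0 ≤ M := le_trans (norm_nonneg _) (hM 0)
  have hrc0 : 0 ≤ rc := le_trans (hrpos 0) (hrc 0)
  have hC : 0 ≤ M + rc := by linarith
  have hterm_nonneg : ∀ n m : ℤ, 0 ≤ Nterm K a n r m := by
    intro n m
    unfold Nterm
    split <;> exact mul_nonneg (mul_nonneg hK0.le (Real.exp_pos _).le) (hrpos m)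
  have hθ0 : 0 ≤ θ :=
    le_trans (tsum_nonneg (hterm_nonneg 0)) (hNr 0)
  intro n ℓ
  -- bound on the exponential correction factor
  have expbound : ∀ s : Finset ℤ, (s.card : ℝ) ≤ (ℓ : ℝ) →
      Real.exp (∑ l ∈ s, (‖A l - 1‖ + r l)) ≤ Real.exp ((M + rc) * ℓ) := by
    intro s hs
    apply Real.exp_le_exp.2
    calc ∑ l ∈ s, (‖A l - 1‖ + r l) ≤ ∑ _l ∈ s, (M + rc) :=
          Finset.sum_le_sum (fun l _ => add_le_add (hM l) (hrc l))
      _ = (s.card : ℝ) * (M + rc) := by rw [Finset.sum_const, nsmul_eq_mul]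
      _ ≤ (ℓ : ℝ) * (M + rc) := mul_le_mul_of_nonneg_right hs hC
      _ = (M + rc) * ℓ := mul_comm _ _
  have card1 : ∀ k : ℤ, n - ℓ ≤ k → ((Finset.Icc k (n - 1)).card : ℝ) ≤ (ℓ : ℝ) := by
    intro k hk
    rw [Int.card_Icc]
    exact_mod_cast Nat.cast_le.2 (Int.toNat_le.2 (by omega) : (n - 1 + 1 - k).toNat ≤ ℓ)
  have card2 : ∀ k : ℤ, k ≤ n + ℓ - 1 → ((Finset.Icc n (k - 1)).card : ℝ) ≤ (ℓ : ℝ) := by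
    intro k hk
    rw [Int.card_Icc]
    exact_mod_cast Nat.cast_le.2 (Int.toNat_le.2 (by omega) : (k - 1 + 1 - n).toNat ≤ ℓ)
  set E := Real.exp ((M + rc) * ℓ) with hE
  have hE0 : 0 < E := Real.exp_pos _
  -- first sum
  have h1 : ∑ k ∈ Finset.Icc (n - ℓ) (n - 1),
      K * Real.exp (-(S a (k + 1) n)) * r k *
        Real.exp (∑ l ∈ Finset.Icc k (n - 1), (‖A l - 1‖ + r l))
      ≤ (∑ k ∈ Finset.Icc (n - ℓ) (n - 1), Nterm K a n r k) * E := by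
    rw [Finset.sum_mul]
    apply Finset.sum_le_sum
    intro k hk
    rw [Finset.mem_Icc] at hk
    have hklt : k < n := by omega
    rw [Nterm, if_pos hklt]
    exact mul_le_mul_of_nonneg_left (expbound _ (card1 k hk.1))
      (mul_nonneg (mul_nonneg hK0.le (Real.exp_pos _).le) (hrpos k))
  -- second sum
  have h2 : ∑ k ∈ Finset.Icc n (n + ℓ - 1),
      K * Real.exp (-(S a n (k + 1))) * r k *
        Real.exp (∑ l ∈ Finset.Icc n (k - 1), (‖A l - 1‖ + r l))
      ≤ (∑ k ∈ Finset.Icc n (n + ℓ - 1), Nterm K a n r k) * E := by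
    rw [Finset.sum_mul]
    apply Finset.sum_le_sum
    intro k hk
    rw [Finset.mem_Icc] at hk
    have hklt : ¬ k < n := by omega
    rw [Nterm, if_neg hklt]
    exact mul_le_mul_of_nonneg_left (expbound _ (card2 k hk.2))
      (mul_nonneg (mul_nonneg hK0.le (Real.exp_pos _).le) (hrpos k))
  -- combine the two partial sums into one finite sum, bounded by the tsum
  have hdisj : Disjoint (Finset.Icc (n - ℓ) (n - 1)) (Finset.Icc n (n + ℓ - 1)) := by
    rw [Finset.disjoint_left]
    intro x hx hx'
    rw [Finset.mem_Icc] at hx hx'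
    omega
  have hsum_le : ∑ k ∈ Finset.Icc (n - ℓ) (n - 1), Nterm K a n r k
      + ∑ k ∈ Finset.Icc n (n + ℓ - 1), Nterm K a n r k ≤ θ := by
    rw [← Finset.sum_union hdisj]
    exact le_trans
      (Summable.sum_le_tsum _ (fun m _ => hterm_nonneg n m) (hrsum n)) (hNr n)
  calc Gamma A K a r n ℓ
      ≤ (∑ k ∈ Finset.Icc (n - ℓ) (n - 1), Nterm K a n r k) * E
        + (∑ k ∈ Finset.Icc n (n + ℓ - 1), Nterm K a n r k) * E :=
        add_le_add h1 h2
    _ = (∑ k ∈ Finset.Icc (n - ℓ) (n - 1), Nterm K a n r k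
        + ∑ k ∈ Finset.Icc n (n + ℓ - 1), Nterm K a n r k) * E := (add_mul _ _ _).symm
    _ ≤ θ * E := mul_le_mul_of_nonneg_right hsum_le hE0.le
    _ ≤ θ * Real.exp (2 * (M + rc) * ℓ) := by
        apply mul_le_mul_of_nonneg_left _ hθ0
        apply Real.exp_le_exp.2
        have : (0 : ℝ) ≤ (M + rc) * ℓ := mul_nonneg hC (Nat.cast_nonneg _)
        nlinarith
    _ = Real.exp (2 * (M + rc) * ℓ) * θ := mul_comm _ _
end
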